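/- Let χ₁ and χ₂ be distinct characters of E^× which are both trivial on F^×, and let π = Ps(χ₁,χ₂) be the principal series representation of GL_2(E) induced from the character of the upper triangular Borel subgroup sending (a, b; 0, d) to χ₁(a)χ₂(d). Then π is irreducible, dim Hom_{GL_2(F)}(π, 1) = 1, and dim Hom_{P(F)}(π, 1) = 3, where P(F) = {(a, b; 0, 1)} is the mirabolic subgroup of GL_2(F). In particular Hom_{P(F)}(π, 1) ≠ Hom_{GL_2(F)}(π, 1), so Ok's identity fails over finite fields. -/

import Mathlib

set_option linter.unusedSectionVars false
set_option linter.unnecessarySeqFocus false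
set_option linter.unreachableTactic false
set_option linter.unusedTactic false

open Matrix Finset

noncomputable section

namespace TestVectors

variable {E : Type*} [Field E] [Fintype E] [DecidableEq E]

/-- The space of the principal series representation `Ps(χ₁,χ₂)` of `GL_2(E)`:
functions transforming on the left under the Borel subgroup of upper triangular matrices by
the character `(a, x; 0, d) ↦ χ₁(a)χ₂(d)`. -/
def psSpace (χ₁ χ₂ : Eˣ →* ℂˣ) : Submodule ℂ (GL (Fin 2) E → ℂ) where
  carrier := {f | ∀ (B g : GL (Fin 2) E) (a d : Eˣ) (x : E),
    (B : Matrix (Fin 2) (Fin 2) E) = !![(a : E), x; 0, (d : E)] →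
    f (B * g) = ((χ₁ a : ℂˣ) : ℂ) * ((χ₂ d : ℂˣ) : ℂ) * f g}
  add_mem' := by
    intro f₁ f₂ h₁ h₂ B g a d x hB
    simp only [Pi.add_apply, h₁ B g a d x hB, h₂ B g a d x hB]
    ring
  zero_mem' := by intro B g a d x hB; simp
  smul_mem' := by
    intro c f hf B g a d x hB
    simp only [Pi.smul_apply, smul_eq_mul, hf B g a d x hB]
    ring

/-- `GL_2(E)` acts on the principal series by right translation. -/
def psRep (χ₁ χ₂ : Eˣ →* ℂˣ) : Representation ℂ (GL (Fin 2) E) ↥(psSpace χ₁ χ₂) where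
  toFun g :=
    { toFun := fun f => ⟨fun x => (f : GL (Fin 2) E → ℂ) (x * g), by
        intro B y a d z hB
        show (f : GL (Fin 2) E → ℂ) (B * y * g) = _
        rw [mul_assoc]
        exact f.2 B (y * g) a d z hB⟩
      map_add' := fun f₁ f₂ => rfl
      map_smul' := fun c f => rfl }
  map_one' := by
    apply LinearMap.ext; intro f
    exact Subtype.ext (funext fun x => by simp)
  map_mul' g h := by
    apply LinearMap.ext; intro f
    exact Subtype.ext (funext fun x => by simp [mul_assoc])

/-- Irreducibility of a representation. -/
def IsIrreducibleRep {G : Type*} [Group G] {V : Type*} [AddCommGroup V] [Module ℂ V]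
    (ρ : Representation ℂ G V) : Prop :=
  Nontrivial V ∧ ∀ S : Submodule ℂ V, (∀ g : G, ∀ v ∈ S, ρ g v ∈ S) → S = ⊥ ∨ S = ⊤

/-- The space of `S`-invariant linear forms on a representation. -/
def invariantForms {G : Type*} [Group G] {V : Type*} [AddCommGroup V] [Module ℂ V]
    (ρ : Representation ℂ G V) (S : Set G) : Submodule ℂ (V →ₗ[ℂ] ℂ) where
  carrier := {L | ∀ g ∈ S, ∀ v, L (ρ g v) = L v}
  add_mem' := by
    intro a b ha hb g hg v
    simp [ha g hg v, hb g hg v]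
  zero_mem' := by intro g hg v; simp
  smul_mem' := by
    intro c a ha g hg v
    simp [ha g hg v]

/-- The subgroup `GL_2(F)` of `σ`-fixed matrices, as a set. -/
def glF (σ₀ : E ≃+* E) : Set (GL (Fin 2) E) :=
  {g | ∀ i j : Fin 2, σ₀ ((g : Matrix (Fin 2) (Fin 2) E) i j) =
    (g : Matrix (Fin 2) (Fin 2) E) i j}

/-- The mirabolic subgroup `P(F)` of `GL_2(F)`: `σ`-fixed matrices with last row `(0,1)`. -/
def mirabF (σ₀ : E ≃+* E) : Set (GL (Fin 2) E) :=
  {g | (∀ i j : Fin 2, σ₀ ((g : Matrix (Fin 2) (Fin 2) E) i j) =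
      (g : Matrix (Fin 2) (Fin 2) E) i j) ∧
    (g : Matrix (Fin 2) (Fin 2) E) 1 0 = 0 ∧ (g : Matrix (Fin 2) (Fin 2) E) 1 1 = 1}

-- ===== auxiliary development =====

/-- Extension of a character of `Eˣ` to `E` by zero. -/
def ch (χ : Eˣ →* ℂˣ) (x : E) : ℂ :=
  if h : x = 0 then 0 else ((χ (Units.mk0 x h) : ℂˣ) : ℂ)

variable (χ₁ χ₂ : Eˣ →* ℂˣ)

lemma ch_zero (χ : Eˣ →* ℂˣ) : ch χ (0 : E) = 0 := by simp [ch]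

lemma ch_unit (χ : Eˣ →* ℂˣ) (u : Eˣ) : ch χ (u : E) = ((χ u : ℂˣ) : ℂ) := by
  rw [ch, dif_neg u.ne_zero]
  congr 1; exact congrArg χ (Units.ext rfl)

lemma ch_one (χ : Eˣ →* ℂˣ) : ch χ (1 : E) = 1 := by
  simpa using ch_unit χ 1

lemma ch_ne_zero (χ : Eˣ →* ℂˣ) {x : E} (h : x ≠ 0) : ch χ x ≠ 0 := by
  rw [ch, dif_neg h]; exact Units.ne_zero _

lemma ch_mul (χ : Eˣ →* ℂˣ) (x y : E) : ch χ (x * y) = ch χ x * ch χ y := by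
  rcases eq_or_ne x 0 with rfl | hx
  · simp [ch_zero]
  rcases eq_or_ne y 0 with rfl | hy
  · simp [ch_zero]
  have hxy : x * y ≠ 0 := mul_ne_zero hx hy
  rw [ch, ch, ch, dif_neg hx, dif_neg hy, dif_neg hxy]
  have h2 : Units.mk0 (x*y) hxy = Units.mk0 x hx * Units.mk0 y hy := by
    ext; simp
  rw [h2, χ.map_mul]; push_cast; ring

lemma ch_inv (χ : Eˣ →* ℂˣ) (x : E) : ch χ x⁻¹ = (ch χ x)⁻¹ := by
  rcases eq_or_ne x 0 with rfl | hx
  · simp [ch_zero]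
  have h1 : ch χ x * ch χ x⁻¹ = 1 := by
    rw [← ch_mul, mul_inv_cancel₀ hx, ch_one]
  exact (inv_eq_of_mul_eq_one_right h1).symm

lemma ch_div (χ : Eˣ →* ℂˣ) (x y : E) : ch χ (x / y) = ch χ x / ch χ y := by
  rw [div_eq_mul_inv, ch_mul, ch_inv, div_eq_mul_inv]

/-- upper triangular element of GL₂. -/
def borel (a d : Eˣ) (x : E) : GL (Fin 2) E :=
  ⟨!![(a : E), x; 0, (d : E)], !![((a⁻¹ : Eˣ) : E), -((a⁻¹ : Eˣ) : E) * x * ((d⁻¹ : Eˣ) : E); 0, ((d⁻¹ : Eˣ) : E)],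
   by ext i j; fin_cases i <;> fin_cases j <;> simp [Matrix.mul_apply, Fin.sum_univ_two] <;> field_simp <;> ring,
   by ext i j; fin_cases i <;> fin_cases j <;> simp [Matrix.mul_apply, Fin.sum_univ_two] <;> field_simp <;> ring⟩

def nmat (t : E) : GL (Fin 2) E :=
  ⟨!![1, 0; t, 1], !![1, 0; -t, 1],
   by rw [mul_fin_two, one_fin_two]; congr 1 <;> norm_num,
   by rw [mul_fin_two, one_fin_two]; congr 1 <;> norm_num⟩

def wmat : GL (Fin 2) E :=
  ⟨!![0, 1; 1, 0], !![0, 1; 1, 0],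
   by rw [mul_fin_two, one_fin_two]; congr 1 <;> norm_num,
   by rw [mul_fin_two, one_fin_two]; congr 1 <;> norm_num⟩

def rp : Option E → GL (Fin 2) E
  | some t => nmat t
  | none => wmat

@[simp] lemma borel_val (a d : Eˣ) (x : E) :
    (borel a d x : Matrix (Fin 2) (Fin 2) E) = !![(a : E), x; 0, (d : E)] := rfl
@[simp] lemma nmat_val (t : E) : (nmat t : Matrix (Fin 2) (Fin 2) E) = !![1, 0; t, 1] := rfl
@[simp] lemma wmat_val : ((wmat : GL (Fin 2) E) : Matrix (Fin 2) (Fin 2) E) = !![0, 1; 1, 0] := rfl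

lemma nmat_zero : (nmat 0 : GL (Fin 2) E) = 1 := by
  ext : 1
  show !![(1:E),0;0,1] = _
  rw [Units.val_one, one_fin_two]

lemma gl_det_ne_zero (g : GL (Fin 2) E) : (g : Matrix (Fin 2) (Fin 2) E).det ≠ 0 := by
  have h : IsUnit (g : Matrix (Fin 2) (Fin 2) E).det := by
    refine IsUnit.of_mul_eq_one ((g⁻¹ : GL (Fin 2) E) : Matrix (Fin 2) (Fin 2) E).det ?_
    rw [← Matrix.det_mul, ← Units.val_mul, mul_inv_cancel, Units.val_one, Matrix.det_one]
  exact h.ne_zero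

lemma gl_row_ne_zero (g : GL (Fin 2) E) (h : (g : Matrix (Fin 2) (Fin 2) E) 1 1 = 0) :
    (g : Matrix (Fin 2) (Fin 2) E) 1 0 ≠ 0 := by
  intro h0
  apply gl_det_ne_zero g
  rw [Matrix.det_fin_two, h, h0]; ring


@[simp] lemma nmat_inv_val (t : E) :
    (((nmat t)⁻¹ : GL (Fin 2) E) : Matrix (Fin 2) (Fin 2) E) = !![1, 0; -t, 1] := rfl
@[simp] lemma wmat_inv_val :
    (((wmat)⁻¹ : GL (Fin 2) E) : Matrix (Fin 2) (Fin 2) E) = !![0, 1; 1, 0] := rfl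

variable {χ₁ χ₂ : Eˣ →* ℂˣ}

lemma ps_borel_mul {f : GL (Fin 2) E → ℂ} (hf : f ∈ psSpace χ₁ χ₂) (a d : Eˣ) (x : E)
    (g : GL (Fin 2) E) :
    f (borel a d x * g) = ch χ₁ (a : E) * ch χ₂ (d : E) * f g := by
  rw [ch_unit, ch_unit]
  exact hf (borel a d x) g a d x rfl

lemma eval_fin {f : GL (Fin 2) E → ℂ} (hf : f ∈ psSpace χ₁ χ₂) (g : GL (Fin 2) E)
    (h : (g : Matrix (Fin 2) (Fin 2) E) 1 1 ≠ 0) :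
    f g = ch χ₁ ((g : Matrix (Fin 2) (Fin 2) E).det / (g : Matrix (Fin 2) (Fin 2) E) 1 1) *
      ch χ₂ ((g : Matrix (Fin 2) (Fin 2) E) 1 1) *
      f (nmat ((g : Matrix (Fin 2) (Fin 2) E) 1 0 / (g : Matrix (Fin 2) (Fin 2) E) 1 1)) := by
  set M := (g : Matrix (Fin 2) (Fin 2) E) with hM
  set t := M 1 0 / M 1 1 with ht
  have hdet : M.det ≠ 0 := gl_det_ne_zero g
  have hA : M.det / M 1 1 ≠ 0 := div_ne_zero hdet h
  set B : GL (Fin 2) E := g * (nmat t)⁻¹ with hB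
  have hBval : (B : Matrix (Fin 2) (Fin 2) E) = !![M.det / M 1 1, M 0 1; 0, M 1 1] := by
    have h1 : (B : Matrix (Fin 2) (Fin 2) E) = M * !![1, 0; -t, 1] := by
      rw [hB, Units.val_mul, nmat_inv_val]
    rw [h1]
    ext i j
    fin_cases i <;> fin_cases j <;>
      simp [Matrix.mul_apply, Fin.sum_univ_two, Matrix.det_fin_two, ht] <;>
      field_simp <;> ring
  have hfact : B * nmat t = g := inv_mul_cancel_right g (nmat t)
  have := hf B (nmat t) (Units.mk0 _ hA) (Units.mk0 _ h) (M 0 1) (by rw [hBval]; rfl)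
  rw [hfact] at this
  rw [this, ← ch_unit χ₁, ← ch_unit χ₂]
  rfl

lemma eval_inf {f : GL (Fin 2) E → ℂ} (hf : f ∈ psSpace χ₁ χ₂) (g : GL (Fin 2) E)
    (h : (g : Matrix (Fin 2) (Fin 2) E) 1 1 = 0) :
    f g = ch χ₁ (-(g : Matrix (Fin 2) (Fin 2) E).det / (g : Matrix (Fin 2) (Fin 2) E) 1 0) *
      ch χ₂ ((g : Matrix (Fin 2) (Fin 2) E) 1 0) * f wmat := by
  set M := (g : Matrix (Fin 2) (Fin 2) E) with hM
  have hdet : M.det ≠ 0 := gl_det_ne_zero g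
  have hc : M 1 0 ≠ 0 := gl_row_ne_zero g h
  have hA : -M.det / M 1 0 ≠ 0 := div_ne_zero (neg_ne_zero.2 hdet) hc
  set B : GL (Fin 2) E := g * wmat⁻¹ with hB
  have hBval : (B : Matrix (Fin 2) (Fin 2) E) = !![-M.det / M 1 0, M 0 0; 0, M 1 0] := by
    have h1 : (B : Matrix (Fin 2) (Fin 2) E) = M * !![0, 1; 1, 0] := by
      rw [hB, Units.val_mul, wmat_inv_val]
    rw [h1]
    ext i j
    fin_cases i <;> fin_cases j <;>
      simp [Matrix.mul_apply, Fin.sum_univ_two, Matrix.det_fin_two, h] <;>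
      field_simp <;> ring
  have hfact : B * wmat = g := inv_mul_cancel_right g wmat
  have := hf B wmat (Units.mk0 _ hA) (Units.mk0 _ hc) (M 0 0) (by rw [hBval]; rfl)
  rw [hfact] at this
  rw [this, ← ch_unit χ₁, ← ch_unit χ₂]
  rfl

/-- The "delta function" model basis of the principal series. -/
def efun (χ₁ χ₂ : Eˣ →* ℂˣ) (z : Option E) (g : GL (Fin 2) E) : ℂ :=
  match z with
  | none => if (g : Matrix (Fin 2) (Fin 2) E) 1 1 = 0 then
      ch χ₁ (-(g : Matrix (Fin 2) (Fin 2) E).det / (g : Matrix (Fin 2) (Fin 2) E) 1 0) *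
        ch χ₂ ((g : Matrix (Fin 2) (Fin 2) E) 1 0) else 0
  | some t => if (g : Matrix (Fin 2) (Fin 2) E) 1 1 = 0 then 0
      else if (g : Matrix (Fin 2) (Fin 2) E) 1 0 / (g : Matrix (Fin 2) (Fin 2) E) 1 1 = t then
        ch χ₁ ((g : Matrix (Fin 2) (Fin 2) E).det / (g : Matrix (Fin 2) (Fin 2) E) 1 1) *
          ch χ₂ ((g : Matrix (Fin 2) (Fin 2) E) 1 1) else 0

lemma efun_mem (z : Option E) : efun χ₁ χ₂ z ∈ psSpace χ₁ χ₂ := by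
  intro B g a d x hB
  set M := (g : Matrix (Fin 2) (Fin 2) E) with hM
  have hval : ((B * g : GL (Fin 2) E) : Matrix (Fin 2) (Fin 2) E) = !![(a:E), x; 0, (d:E)] * M := by
    rw [Units.val_mul, hB]
  have h10 : ((B * g : GL (Fin 2) E) : Matrix (Fin 2) (Fin 2) E) 1 0 = (d:E) * M 1 0 := by
    rw [hval, Matrix.eta_fin_two M, mul_fin_two]; simp
  have h11 : ((B * g : GL (Fin 2) E) : Matrix (Fin 2) (Fin 2) E) 1 1 = (d:E) * M 1 1 := by
    rw [hval, Matrix.eta_fin_two M, mul_fin_two]; simp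
  have hdet : ((B * g : GL (Fin 2) E) : Matrix (Fin 2) (Fin 2) E).det = ((a:E) * (d:E)) * M.det := by
    rw [hval, Matrix.det_mul, Matrix.det_fin_two]; simp
  have had : (a:E) ≠ 0 := a.ne_zero
  have hdd : (d:E) ≠ 0 := d.ne_zero
  rw [← ch_unit χ₁, ← ch_unit χ₂]
  match z with
  | none =>
    simp only [efun]
    rw [h10, h11, hdet]
    rcases eq_or_ne (M 1 1) 0 with h | h
    · rw [if_pos (show (d:E) * M 1 1 = 0 by rw [h, mul_zero]), if_pos h]
      have hc : M 1 0 ≠ 0 := gl_row_ne_zero g h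
      have harg : -((a:E) * d * M.det) / ((d:E) * M 1 0) = (a:E) * (-M.det / M 1 0) := by
        field_simp
      rw [harg, ch_mul, ch_mul]
      ring
    · rw [if_neg (mul_ne_zero hdd h), if_neg h]; ring
  | some t =>
    simp only [efun]
    rw [h10, h11, hdet]
    rcases eq_or_ne (M 1 1) 0 with h | h
    · rw [if_pos (show (d:E) * M 1 1 = 0 by rw [h, mul_zero]), if_pos h]; ring
    · rw [if_neg (mul_ne_zero hdd h), if_neg h]
      have hr : (d:E) * M 1 0 / ((d:E) * M 1 1) = M 1 0 / M 1 1 :=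
        mul_div_mul_left _ _ hdd
      rw [hr]
      rcases eq_or_ne (M 1 0 / M 1 1) t with he | he
      · rw [if_pos he, if_pos he]
        have harg : (a:E) * d * M.det / ((d:E) * M 1 1) = (a:E) * (M.det / M 1 1) := by
          field_simp
        rw [harg, ch_mul, ch_mul]
        ring
      · rw [if_neg he, if_neg he]; ring

lemma rp_11 (z : Option E) : ((rp z : GL (Fin 2) E) : Matrix (Fin 2) (Fin 2) E) 1 1 =
    (if z = none then 0 else 1) := by
  match z with
  | none => simp [rp]
  | some t => simp [rp]

lemma efun_rp (z y : Option E) : efun χ₁ χ₂ z (rp y) = if y = z then 1 else 0 := by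
  match z, y with
  | none, none =>
    simp only [efun, rp, wmat_val]
    norm_num
    norm_num [ch_one]
  | none, some t => simp [efun, rp]
  | some s, none => simp [efun, rp]
  | some s, some t =>
    simp only [efun, rp, nmat_val]
    norm_num
    simp [ch_one]

lemma span_eval {f : GL (Fin 2) E → ℂ} (hf : f ∈ psSpace χ₁ χ₂) (g : GL (Fin 2) E) :
    f g = ∑ z : Option E, efun χ₁ χ₂ z g * f (rp z) := by
  rw [Fintype.sum_option]
  rcases eq_or_ne ((g : Matrix (Fin 2) (Fin 2) E) 1 1) 0 with h | h
  · have hz : ∑ t : E, efun χ₁ χ₂ (some t) g * f (rp (some t)) = 0 :=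
      Finset.sum_eq_zero (by intro t _; simp [efun, h])
    rw [hz, add_zero]
    rw [eval_inf hf g h]
    simp [efun, h, rp]
  · have hz : efun χ₁ χ₂ none g * f (rp none) = 0 := by simp [efun, h]
    rw [hz, zero_add]
    rw [Finset.sum_eq_single ((g : Matrix (Fin 2) (Fin 2) E) 1 0 / (g : Matrix (Fin 2) (Fin 2) E) 1 1)]
    · rw [eval_fin hf g h]
      simp [efun, h, rp]
    · intro t _ ht
      have hcond : ¬ ((g : Matrix (Fin 2) (Fin 2) E) 1 0 / (g : Matrix (Fin 2) (Fin 2) E) 1 1 = t) :=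
        fun hc => ht hc.symm |>.elim
      simp [efun, h, hcond]
    · intro hmem; exact absurd (Finset.mem_univ _) hmem

def eV (χ₁ χ₂ : Eˣ →* ℂˣ) (z : Option E) : ↥(psSpace χ₁ χ₂) := ⟨efun χ₁ χ₂ z, efun_mem z⟩

def evL (χ₁ χ₂ : Eˣ →* ℂˣ) (z : Option E) : ↥(psSpace χ₁ χ₂) →ₗ[ℂ] ℂ where
  toFun f := (f : GL (Fin 2) E → ℂ) (rp z)
  map_add' f g := rfl
  map_smul' c f := rfl

def Lc (χ₁ χ₂ : Eˣ →* ℂˣ) (c : Option E → ℂ) : ↥(psSpace χ₁ χ₂) →ₗ[ℂ] ℂ :=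
  ∑ z : Option E, c z • evL χ₁ χ₂ z

lemma Lc_apply (c : Option E → ℂ) (f : ↥(psSpace χ₁ χ₂)) :
    Lc χ₁ χ₂ c f = ∑ z : Option E, c z * (f : GL (Fin 2) E → ℂ) (rp z) := by
  simp [Lc, evL]

lemma Lc_eV (c : Option E → ℂ) (y : Option E) : Lc χ₁ χ₂ c (eV χ₁ χ₂ y) = c y := by
  rw [Lc_apply]
  have : ∀ z : Option E, c z * (eV χ₁ χ₂ y : GL (Fin 2) E → ℂ) (rp z) =
      if z = y then c z else 0 := by
    intro z
    show c z * efun χ₁ χ₂ y (rp z) = _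
    rw [efun_rp]
    split_ifs with h1 <;> simp
  simp only [this]
  simp

lemma subtype_span (f : ↥(psSpace χ₁ χ₂)) :
    f = ∑ z : Option E, (f : GL (Fin 2) E → ℂ) (rp z) • eV χ₁ χ₂ z := by
  apply Subtype.ext
  have hco : ((∑ z : Option E, (f : GL (Fin 2) E → ℂ) (rp z) • eV χ₁ χ₂ z : ↥(psSpace χ₁ χ₂)) :
      GL (Fin 2) E → ℂ) = ∑ z : Option E, (f : GL (Fin 2) E → ℂ) (rp z) • efun χ₁ χ₂ z := by
    push_cast
    rfl
  rw [hco]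
  funext g
  rw [Finset.sum_apply]
  simpa [mul_comm] using span_eval f.2 g

lemma L_eq_Lc (L : ↥(psSpace χ₁ χ₂) →ₗ[ℂ] ℂ) :
    L = Lc χ₁ χ₂ (fun z => L (eV χ₁ χ₂ z)) := by
  ext f
  conv_lhs => rw [subtype_span f]
  rw [map_sum, Lc_apply]
  refine Finset.sum_congr rfl fun z _ => ?_
  rw [L.map_smul]
  simp [mul_comm, smul_eq_mul]

def rowC (z : Option E) (h : GL (Fin 2) E) : E :=
  match z with
  | some t => t * (h : Matrix (Fin 2) (Fin 2) E) 0 0 + (h : Matrix (Fin 2) (Fin 2) E) 1 0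
  | none => (h : Matrix (Fin 2) (Fin 2) E) 0 0

def rowD (z : Option E) (h : GL (Fin 2) E) : E :=
  match z with
  | some t => t * (h : Matrix (Fin 2) (Fin 2) E) 0 1 + (h : Matrix (Fin 2) (Fin 2) E) 1 1
  | none => (h : Matrix (Fin 2) (Fin 2) E) 0 1

def dsgn : Option E → E
  | some _ => 1
  | none => -1

lemma rpmul_10 (z : Option E) (h : GL (Fin 2) E) :
    ((rp z * h : GL (Fin 2) E) : Matrix (Fin 2) (Fin 2) E) 1 0 = rowC z h := by
  match z with
  | some t =>
    rw [Units.val_mul]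
    simp [rp, rowC, Matrix.mul_apply, Fin.sum_univ_two]
  | none =>
    rw [Units.val_mul]
    simp [rp, rowC, Matrix.mul_apply, Fin.sum_univ_two]

lemma rpmul_11 (z : Option E) (h : GL (Fin 2) E) :
    ((rp z * h : GL (Fin 2) E) : Matrix (Fin 2) (Fin 2) E) 1 1 = rowD z h := by
  match z with
  | some t =>
    rw [Units.val_mul]
    simp [rp, rowD, Matrix.mul_apply, Fin.sum_univ_two]
  | none =>
    rw [Units.val_mul]
    simp [rp, rowD, Matrix.mul_apply, Fin.sum_univ_two]

lemma rpmul_det (z : Option E) (h : GL (Fin 2) E) :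
    ((rp z * h : GL (Fin 2) E) : Matrix (Fin 2) (Fin 2) E).det =
      dsgn z * (h : Matrix (Fin 2) (Fin 2) E).det := by
  match z with
  | some t =>
    rw [Units.val_mul, Matrix.det_mul]
    simp [rp, dsgn, Matrix.det_fin_two]
  | none =>
    rw [Units.val_mul, Matrix.det_mul]
    simp [rp, dsgn, Matrix.det_fin_two]

/-- The right action of `GL₂(E)` on `P¹(E)` in the coset coordinates. -/
def act (z : Option E) (h : GL (Fin 2) E) : Option E :=
  if rowD z h = 0 then none else some (rowC z h / rowD z h)

/-- The cocycle. -/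
def Aco (χ₁ χ₂ : Eˣ →* ℂˣ) (z : Option E) (h : GL (Fin 2) E) : ℂ :=
  if rowD z h = 0 then
    ch χ₁ (-(dsgn z * (h : Matrix (Fin 2) (Fin 2) E).det) / rowC z h) * ch χ₂ (rowC z h)
  else
    ch χ₁ ((dsgn z * (h : Matrix (Fin 2) (Fin 2) E).det) / rowD z h) * ch χ₂ (rowD z h)

lemma master {f : GL (Fin 2) E → ℂ} (hf : f ∈ psSpace χ₁ χ₂) (z : Option E)
    (h : GL (Fin 2) E) :
    f (rp z * h) = Aco χ₁ χ₂ z h * f (rp (act z h)) := by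
  rcases eq_or_ne (rowD z h) 0 with hD | hD
  · rw [eval_inf hf _ (by rw [rpmul_11]; exact hD)]
    rw [act, if_pos hD, Aco, if_pos hD, rpmul_10, rpmul_det]
    rfl
  · rw [eval_fin hf _ (by rw [rpmul_11]; exact hD)]
    rw [act, if_neg hD, Aco, if_neg hD, rpmul_10, rpmul_11, rpmul_det]
    rfl

def pt (g : GL (Fin 2) E) : Option E :=
  if (g : Matrix (Fin 2) (Fin 2) E) 1 1 = 0 then none
  else some ((g : Matrix (Fin 2) (Fin 2) E) 1 0 / (g : Matrix (Fin 2) (Fin 2) E) 1 1)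

lemma act_eq_pt (z : Option E) (h : GL (Fin 2) E) : act z h = pt (rp z * h) := by
  rw [act, pt, rpmul_10, rpmul_11]

lemma pt_rp (z : Option E) : pt (rp z) = z := by
  match z with
  | some t => simp [pt, rp]
  | none => simp [pt, rp]

lemma exists_borel (g : GL (Fin 2) E) :
    ∃ (a d : Eˣ) (x : E), g = borel a d x * rp (pt g) := by
  rcases eq_or_ne ((g : Matrix (Fin 2) (Fin 2) E) 1 1) 0 with h | h
  · have hc : (g : Matrix (Fin 2) (Fin 2) E) 1 0 ≠ 0 := gl_row_ne_zero g h
    have hA : -(g : Matrix (Fin 2) (Fin 2) E).det / (g : Matrix (Fin 2) (Fin 2) E) 1 0 ≠ 0 :=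
      div_ne_zero (neg_ne_zero.2 (gl_det_ne_zero g)) hc
    refine ⟨Units.mk0 _ hA, Units.mk0 _ hc, (g : Matrix (Fin 2) (Fin 2) E) 0 0, ?_⟩
    rw [pt, if_pos h]
    have key : g * wmat⁻¹ = borel (Units.mk0 _ hA) (Units.mk0 _ hc)
        ((g : Matrix (Fin 2) (Fin 2) E) 0 0) := by
      apply Units.ext
      show ((g : Matrix (Fin 2) (Fin 2) E) * !![0,1;1,0]) = _
      rw [borel_val]
      ext i j
      fin_cases i <;> fin_cases j <;>
        simp [Matrix.mul_apply, Fin.sum_univ_two, Matrix.det_fin_two, h] <;>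
        field_simp <;> ring
    show g = _ * wmat
    rw [← key, inv_mul_cancel_right]
  · have hA : (g : Matrix (Fin 2) (Fin 2) E).det / (g : Matrix (Fin 2) (Fin 2) E) 1 1 ≠ 0 :=
      div_ne_zero (gl_det_ne_zero g) h
    refine ⟨Units.mk0 _ hA, Units.mk0 _ h, (g : Matrix (Fin 2) (Fin 2) E) 0 1, ?_⟩
    rw [pt, if_neg h]
    have key : g * (nmat ((g : Matrix (Fin 2) (Fin 2) E) 1 0 / (g : Matrix (Fin 2) (Fin 2) E) 1 1))⁻¹ =
        borel (Units.mk0 _ hA) (Units.mk0 _ h) ((g : Matrix (Fin 2) (Fin 2) E) 0 1) := by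
      apply Units.ext
      show ((g : Matrix (Fin 2) (Fin 2) E) * !![1,0;-(_ / _),1]) = _
      rw [borel_val]
      ext i j
      fin_cases i <;> fin_cases j <;>
        simp [Matrix.mul_apply, Fin.sum_univ_two, Matrix.det_fin_two] <;>
        field_simp <;> ring
    show g = _ * nmat _
    rw [← key, inv_mul_cancel_right]

lemma borel_inv (a d : Eˣ) (x : E) :
    (borel a d x)⁻¹ = borel a⁻¹ d⁻¹ (-((a⁻¹ : Eˣ) : E) * x * ((d⁻¹ : Eˣ) : E)) := by
  apply Units.ext
  rfl

lemma pt_borel_mul (a d : Eˣ) (x : E) (g : GL (Fin 2) E) :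
    pt (borel a d x * g) = pt g := by
  have h10 : ((borel a d x * g : GL (Fin 2) E) : Matrix (Fin 2) (Fin 2) E) 1 0 =
      (d : E) * (g : Matrix (Fin 2) (Fin 2) E) 1 0 := by
    rw [Units.val_mul, borel_val]
    simp [Matrix.mul_apply, Fin.sum_univ_two]
  have h11 : ((borel a d x * g : GL (Fin 2) E) : Matrix (Fin 2) (Fin 2) E) 1 1 =
      (d : E) * (g : Matrix (Fin 2) (Fin 2) E) 1 1 := by
    rw [Units.val_mul, borel_val]
    simp [Matrix.mul_apply, Fin.sum_univ_two]
  rw [pt, pt, h10, h11]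
  rcases eq_or_ne ((g : Matrix (Fin 2) (Fin 2) E) 1 1) 0 with h | h
  · rw [if_pos (by rw [h, mul_zero]), if_pos h]
  · rw [if_neg (mul_ne_zero d.ne_zero h), if_neg h,
      mul_div_mul_left _ _ (d.ne_zero : (d:E) ≠ 0)]

lemma act_mul (z : Option E) (h1 h2 : GL (Fin 2) E) :
    act (act z h1) h2 = act z (h1 * h2) := by
  rw [act_eq_pt, act_eq_pt, act_eq_pt z (h1 * h2)]
  obtain ⟨a, d, x, hg⟩ := exists_borel (rp z * h1)
  calc pt (rp (pt (rp z * h1)) * h2)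
      = pt (borel a d x * (rp (pt (rp z * h1)) * h2)) := (pt_borel_mul a d x _).symm
    _ = pt (rp z * (h1 * h2)) := by rw [← mul_assoc, ← hg, mul_assoc]

lemma act_one (z : Option E) : act z 1 = z := by
  rw [act_eq_pt, mul_one, pt_rp]

lemma act_bijective (h : GL (Fin 2) E) : Function.Bijective (fun z => act z h) := by
  apply Function.bijective_iff_has_inverse.2
  refine ⟨fun z => act z h⁻¹, fun z => ?_, fun z => ?_⟩
  · show act (act z h) h⁻¹ = z
    rw [act_mul, mul_inv_cancel, act_one]
  · show act (act z h⁻¹) h = z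
    rw [act_mul, inv_mul_cancel, act_one]

lemma rho_eV_coord (h : GL (Fin 2) E) (y z : Option E) :
    ((psRep χ₁ χ₂ h (eV χ₁ χ₂ y) : ↥(psSpace χ₁ χ₂)) : GL (Fin 2) E → ℂ) (rp z) =
      Aco χ₁ χ₂ z h * (if act z h = y then 1 else 0) := by
  show efun χ₁ χ₂ y (rp z * h) = _
  rw [master (efun_mem y) z h, efun_rp]

lemma rho_eV (h : GL (Fin 2) E) (z : Option E) :
    psRep χ₁ χ₂ h (eV χ₁ χ₂ (act z h)) = Aco χ₁ χ₂ z h • eV χ₁ χ₂ z := by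
  rw [subtype_span (psRep χ₁ χ₂ h (eV χ₁ χ₂ (act z h)))]
  rw [Finset.sum_eq_single z]
  · rw [rho_eV_coord, if_pos rfl, mul_one]
  · intro z' _ hz'
    rw [rho_eV_coord, if_neg (fun hc => hz' ((act_bijective h).1 hc)), mul_zero, zero_smul]
  · intro hmem; exact absurd (Finset.mem_univ _) hmem

lemma invariant_rel {L : ↥(psSpace χ₁ χ₂) →ₗ[ℂ] ℂ} {S : Set (GL (Fin 2) E)}
    (hL : L ∈ invariantForms (psRep χ₁ χ₂) S) {h : GL (Fin 2) E} (hh : h ∈ S) (z : Option E) :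
    L (eV χ₁ χ₂ (act z h)) = Aco χ₁ χ₂ z h * L (eV χ₁ χ₂ z) := by
  have h1 := hL h hh (eV χ₁ χ₂ (act z h))
  rw [rho_eV] at h1
  rw [← h1, L.map_smul, smul_eq_mul]

lemma Lc_invariant {c : Option E → ℂ} {S : Set (GL (Fin 2) E)}
    (hc : ∀ h ∈ S, ∀ z, c (act z h) = Aco χ₁ χ₂ z h * c z) :
    Lc χ₁ χ₂ c ∈ invariantForms (psRep χ₁ χ₂) S := by
  intro h hh f
  rw [Lc_apply, Lc_apply]
  have key : ∀ z : Option E, c z * ((psRep χ₁ χ₂ h f : ↥(psSpace χ₁ χ₂)) :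
      GL (Fin 2) E → ℂ) (rp z) =
      c (act z h) * (f : GL (Fin 2) E → ℂ) (rp (act z h)) := by
    intro z
    show c z * (f : GL (Fin 2) E → ℂ) (rp z * h) = _
    rw [master f.2 z h, hc h hh z]; ring
  rw [Finset.sum_congr rfl (fun z _ => key z)]
  exact Fintype.sum_bijective (fun z => act z h) (act_bijective h) _ _ (fun z => rfl)

lemma sigma_ne_zero (σ₀ : E ≃+* E) {x : E} (hx : x ≠ 0) : σ₀ x ≠ 0 := by
  intro h
  exact hx (σ₀.injective (h.trans (map_zero σ₀).symm))

lemma sigma_sigma {q : ℕ} (σ₀ : E ≃+* E) (hcard : Fintype.card E = q ^ 2)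
    (hσ₀ : ∀ x : E, σ₀ x = x ^ q) (x : E) : σ₀ (σ₀ x) = x := by
  rw [hσ₀ (σ₀ x), hσ₀ x, ← pow_mul, ← sq, ← hcard, FiniteField.pow_card]

lemma exists_nonfixed {q : ℕ} (σ₀ : E ≃+* E) (hcard : Fintype.card E = q ^ 2)
    (hσ₀ : ∀ x : E, σ₀ x = x ^ q) : ∃ x : E, σ₀ x ≠ x := by
  by_contra hall
  push_neg at hall
  have hq2 : 2 ≤ q := by
    by_contra hq
    push_neg at hq
    have hcard2 : 2 ≤ Fintype.card E := Fintype.one_lt_card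
    interval_cases q <;> omega
  obtain ⟨g, hg⟩ := IsCyclic.exists_generator (α := Eˣ)
  have hgq : (g : E) ^ q = (g : E) := by rw [← hσ₀, hall]
  have hgu : g ^ q = g := Units.ext (by push_cast; exact hgq)
  have h1 : g ^ (q - 1) = 1 := by
    have : g ^ (q - 1) * g = g := by
      rw [← pow_succ]
      have : q - 1 + 1 = q := by omega
      rw [this, hgu]
    exact mul_right_cancel (by rw [this, one_mul])
  have horder : orderOf g ∣ q - 1 := orderOf_dvd_of_pow_eq_one h1
  have hoc : orderOf g = q ^ 2 - 1 := by
    rw [orderOf_eq_card_of_forall_mem_zpowers hg, Nat.card_eq_fintype_card,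
      Fintype.card_units, hcard]
  rw [hoc] at horder
  have hle : q ^ 2 - 1 ≤ q - 1 := Nat.le_of_dvd (by omega) horder
  have h3 : q < q ^ 2 := by nlinarith
  have h4 : q - 1 < q ^ 2 - 1 := by
    have h5 : (1:ℕ) ≤ q := by omega
    omega
  omega

lemma sigma_basis (σ₀ : E ≃+* E) (hss : ∀ x : E, σ₀ (σ₀ x) = x) {u : E} (hu : σ₀ u ≠ u)
    (x : E) : ∃ c e : E, σ₀ c = c ∧ σ₀ e = e ∧ x = c * u + e := by
  have hden : u - σ₀ u ≠ 0 := sub_ne_zero.2 (Ne.symm hu)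
  set c := (x - σ₀ x) / (u - σ₀ u) with hc
  have hcfix : σ₀ c = c := by
    rw [hc, map_div₀, map_sub, map_sub, hss, hss]
    rw [div_eq_div_iff (sub_ne_zero.2 hu) hden]
    ring
  refine ⟨c, x - c * u, hcfix, ?_, by ring⟩
  have key : (x - σ₀ x) = c * (u - σ₀ u) := (div_mul_cancel₀ _ hden).symm
  rw [map_sub, _root_.map_mul, hcfix]
  linear_combination -key

lemma ch_fixed (σ₀ : E ≃+* E) {χ : Eˣ →* ℂˣ} (htriv : ∀ x : Eˣ, σ₀ (x : E) = (x : E) → χ x = 1)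
    {x : E} (hx : x ≠ 0) (hfix : σ₀ x = x) : ch χ x = 1 := by
  rw [ch, dif_neg hx, htriv (Units.mk0 x hx) hfix, Units.val_one]

lemma ch_sigma (σ₀ : E ≃+* E) (hss : ∀ x : E, σ₀ (σ₀ x) = x) {χ : Eˣ →* ℂˣ}
    (htriv : ∀ x : Eˣ, σ₀ (x : E) = (x : E) → χ x = 1) {x : E} (hx : x ≠ 0) :
    ch χ (σ₀ x) = (ch χ x)⁻¹ := by
  have hsx : σ₀ x ≠ 0 := sigma_ne_zero σ₀ hx
  have hnorm : σ₀ (x * σ₀ x) = x * σ₀ x := by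
    rw [_root_.map_mul, hss]; ring
  have h1 : ch χ (x * σ₀ x) = 1 := ch_fixed σ₀ htriv (mul_ne_zero hx hsx) hnorm
  rw [ch_mul] at h1
  exact (inv_eq_of_mul_eq_one_right h1).symm

lemma sum_char (χ : Eˣ →* ℂˣ) (hχ : ∃ u : Eˣ, χ u ≠ 1) :
    ∑ d : Eˣ, ((χ d : ℂˣ) : ℂ) = 0 := by
  obtain ⟨u0, hu0⟩ := hχ
  have hS : ((χ u0 : ℂˣ) : ℂ) * ∑ d : Eˣ, ((χ d : ℂˣ) : ℂ) = ∑ d : Eˣ, ((χ d : ℂˣ) : ℂ) := by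
    rw [Finset.mul_sum]
    exact Fintype.sum_bijective (fun d => u0 * d) (Group.mulLeft_bijective u0) _ _
      (fun d => by rw [_root_.map_mul]; push_cast; ring)
  have h2 : (((χ u0 : ℂˣ) : ℂ) - 1) * ∑ d : Eˣ, ((χ d : ℂˣ) : ℂ) = 0 := by
    rw [sub_mul, hS]; ring
  rcases mul_eq_zero.1 h2 with h | h
  · exact absurd (Units.ext (by rw [sub_eq_zero] at h; rw [h]; rfl)) hu0
  · exact h

lemma sum_char12 {χ₁ χ₂ : Eˣ →* ℂˣ} (hne : χ₁ ≠ χ₂) :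
    ∑ d : Eˣ, ch χ₁ (d : E) * (ch χ₂ (d : E))⁻¹ = 0 := by
  have h0 : ∀ d : Eˣ, ch χ₁ (d : E) * (ch χ₂ (d : E))⁻¹ = (((χ₁ * χ₂⁻¹) d : ℂˣ) : ℂ) := by
    intro d
    rw [ch_unit, ch_unit]
    have h1 : (χ₁ * χ₂⁻¹) d = χ₁ d * (χ₂ d)⁻¹ := rfl
    rw [h1, Units.val_mul, Units.val_inv_eq_inv_val]
  rw [Finset.sum_congr rfl (fun d _ => h0 d)]
  apply sum_char
  by_contra hc
  push_neg at hc
  exact hne (MonoidHom.ext fun u => mul_inv_eq_one.mp (hc u))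

lemma rowC_ne_zero (z : Option E) (h : GL (Fin 2) E) (hD : rowD z h = 0) : rowC z h ≠ 0 := by
  have h2 := gl_row_ne_zero (rp z * h) (by rw [rpmul_11]; exact hD)
  rw [rpmul_10] at h2
  exact h2

/-- Nonfixed points stay nonfixed under σ-rational Möbius maps. -/
lemma gl_nonfixed (σ₀ : E ≃+* E) (hss : ∀ x : E, σ₀ (σ₀ x) = x) {t p r s u : E}
    (hp : σ₀ p = p) (hr : σ₀ r = r) (hs : σ₀ s = s) (hu2 : σ₀ u = u)
    (hdet : p * u - r * s ≠ 0) (ht : σ₀ t ≠ t) :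
    t * r + u ≠ 0 ∧ σ₀ ((t * p + s) / (t * r + u)) ≠ (t * p + s) / (t * r + u) := by
  have hden : ∀ y : E, σ₀ y ≠ y → y * r + u ≠ 0 := by
    intro y hy h0
    rcases eq_or_ne r 0 with rfl | hr0
    · rw [mul_zero, zero_add] at h0
      apply hdet
      rw [h0]; ring
    · have hyv : y = -u / r := by
        rw [eq_div_iff hr0]; linear_combination h0
      apply hy
      rw [hyv, map_div₀, map_neg, hu2, hr]
  have hD : t * r + u ≠ 0 := hden t ht
  have hsD : σ₀ t * r + u ≠ 0 := by
    apply hden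
    intro hfix
    rw [hss t] at hfix
    exact ht hfix.symm
  refine ⟨hD, ?_⟩
  intro heq
  rw [map_div₀, map_add, map_add, _root_.map_mul, _root_.map_mul, hp, hr, hs, hu2] at heq
  rw [div_eq_div_iff hsD hD] at heq
  apply ht
  have key : (σ₀ t - t) * (p * u - r * s) = 0 := by linear_combination heq
  rcases mul_eq_zero.1 key with h | h
  · exact sub_eq_zero.1 h
  · exact absurd h hdet

@[simp] lemma dsgn_some (t : E) : dsgn (some t) = 1 := rfl
@[simp] lemma dsgn_none : dsgn (none : Option E) = -1 := rfl

section fixtools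
variable (σ₀ : E ≃+* E)

lemma fix_mul {x y : E} (hx : σ₀ x = x) (hy : σ₀ y = y) : σ₀ (x * y) = x * y := by
  rw [_root_.map_mul, hx, hy]
lemma fix_add {x y : E} (hx : σ₀ x = x) (hy : σ₀ y = y) : σ₀ (x + y) = x + y := by
  rw [map_add, hx, hy]
lemma fix_div {x y : E} (hx : σ₀ x = x) (hy : σ₀ y = y) : σ₀ (x / y) = x / y := by
  rw [map_div₀, hx, hy]
lemma fix_neg {x : E} (hx : σ₀ x = x) : σ₀ (-x) = -x := by rw [map_neg, hx]
lemma fix_one : σ₀ (1 : E) = 1 := map_one σ₀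
lemma fix_zero : σ₀ (0 : E) = 0 := map_zero σ₀

end fixtools

lemma mirab_data (σ₀ : E ≃+* E) {h : GL (Fin 2) E} (hh : h ∈ mirabF σ₀) :
    ∃ a b : E, σ₀ a = a ∧ σ₀ b = b ∧ a ≠ 0 ∧
      (∀ t : E, rowC (some t) h = t * a) ∧ (∀ t : E, rowD (some t) h = t * b + 1) ∧
      rowC none h = a ∧ rowD none h = b ∧ (h : Matrix (Fin 2) (Fin 2) E).det = a := by
  obtain ⟨hfixed, h10, h11⟩ := hh
  have hdet : (h : Matrix (Fin 2) (Fin 2) E).det = (h : Matrix (Fin 2) (Fin 2) E) 0 0 := by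
    rw [Matrix.det_fin_two, h10, h11]; ring
  refine ⟨_, _, hfixed 0 0, hfixed 0 1, ?_, ?_, ?_, rfl, rfl, hdet⟩
  · rw [← hdet]; exact gl_det_ne_zero h
  · intro t; show t * _ + _ = _; rw [h10, add_zero]
  · intro t; show t * _ + _ = _; rw [h11]

/-- coefficient function: delta at `some 0`. -/
def cA : Option E → ℂ := fun z => if z = some 0 then 1 else 0

/-- coefficient function: indicator of the rational orbit `{∞} ∪ Fˣ`. -/
def cB (σ₀ : E ≃+* E) : Option E → ℂ := fun z =>
  match z with
  | none => 1
  | some t => if t ≠ 0 ∧ σ₀ t = t then 1 else 0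

/-- coefficient function supported on the non-rational orbit. -/
def cC (σ₀ : E ≃+* E) (χ₁ χ₂ : Eˣ →* ℂˣ) : Option E → ℂ := fun z =>
  match z with
  | none => 0
  | some t => if σ₀ t ≠ t then ch χ₁ t * (ch χ₂ t)⁻¹ else 0

/-- coefficient function: indicator of `P¹(F)`. -/
def cG (σ₀ : E ≃+* E) : Option E → ℂ := fun z =>
  match z with
  | none => 1
  | some t => if σ₀ t = t then 1 else 0

variable {σ₀ : E ≃+* E}

lemma cA_rel {χ₁ χ₂ : Eˣ →* ℂˣ} (htriv₁ : ∀ x : Eˣ, σ₀ (x : E) = (x : E) → χ₁ x = 1)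
    {h : GL (Fin 2) E} (hh : h ∈ mirabF σ₀) (z : Option E) :
    cA (act z h) = Aco χ₁ χ₂ z h * cA z := by
  obtain ⟨a, b, ha, hb, ha0, hC, hD, hCn, hDn, hdet⟩ := mirab_data σ₀ hh
  match z with
  | some t =>
    rcases eq_or_ne t 0 with rfl | ht
    · have hDv : rowD (some (0:E)) h = 1 := by rw [hD]; ring
      have hCv : rowC (some (0:E)) h = 0 := by rw [hC]; ring
      have hch : ch χ₁ a = 1 := ch_fixed σ₀ htriv₁ ha0 ha
      rw [act, hDv, hCv, if_neg one_ne_zero, Aco, hDv, hCv, if_neg one_ne_zero, hdet]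
      simp [cA, hch, ch_one]
    · have hRHS : cA (some t) = 0 := by simp [cA, ht]
      rw [hRHS, mul_zero, act]
      split_ifs with hD0
      · simp [cA]
      · have hne : rowC (some t) h / rowD (some t) h ≠ 0 :=
          div_ne_zero (by rw [hC]; exact mul_ne_zero ht ha0) hD0
        simp [cA, hne]
  | none =>
    have hRHS : cA (none : Option E) = 0 := by simp [cA]
    rw [hRHS, mul_zero, act]
    split_ifs with hD0
    · simp [cA]
    · have hne : rowC none h / rowD none h ≠ 0 :=
        div_ne_zero (by rw [hCn]; exact ha0) hD0
      simp [cA, hne]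

lemma cB_rel {χ₁ χ₂ : Eˣ →* ℂˣ} (hss : ∀ x : E, σ₀ (σ₀ x) = x)
    (htriv₁ : ∀ x : Eˣ, σ₀ (x : E) = (x : E) → χ₁ x = 1)
    (htriv₂ : ∀ x : Eˣ, σ₀ (x : E) = (x : E) → χ₂ x = 1)
    {h : GL (Fin 2) E} (hh : h ∈ mirabF σ₀) (z : Option E) :
    cB σ₀ (act z h) = Aco χ₁ χ₂ z h * cB σ₀ z := by
  obtain ⟨a, b, ha, hb, ha0, hC, hD, hCn, hDn, hdet⟩ := mirab_data σ₀ hh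
  match z with
  | some t =>
    rcases eq_or_ne t 0 with rfl | ht0
    · -- t = 0 : both sides are 0
      have hDv : rowD (some (0:E)) h = 1 := by rw [hD]; ring
      have hCv : rowC (some (0:E)) h = 0 := by rw [hC]; ring
      rw [act, hDv, hCv, if_neg one_ne_zero]
      norm_num
      simp [cB]
    rcases eq_or_ne (σ₀ t) t with hfix | hfix
    · -- rational t ≠ 0 : both sides are 1
      have hRHS : cB σ₀ (some t) = 1 := by simp [cB, ht0, hfix]
      rw [hRHS, mul_one, act, Aco, hC, hD, hdet]
      have hta : t * a ≠ 0 := mul_ne_zero ht0 ha0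
      have htafix : σ₀ (t * a) = t * a := fix_mul σ₀ hfix ha
      split_ifs with hD0
      · -- goes to infinity
        rw [cB]
        rw [ch_fixed σ₀ htriv₂ hta htafix, ch_fixed σ₀ htriv₁ _ _, mul_one]
        · rw [dsgn_some, one_mul]
          exact div_ne_zero (neg_ne_zero.2 ha0) hta
        · rw [dsgn_some, one_mul]
          exact fix_div σ₀ (fix_neg σ₀ ha) htafix
      · have hDfix : σ₀ (t * b + 1) = t * b + 1 :=
          fix_add σ₀ (fix_mul σ₀ hfix hb) (fix_one σ₀)
        have hval : t * a / (t * b + 1) ≠ 0 := div_ne_zero hta hD0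
        have hvalfix : σ₀ (t * a / (t * b + 1)) = t * a / (t * b + 1) :=
          fix_div σ₀ htafix hDfix
        have hLHS : cB σ₀ (some (t * a / (t * b + 1))) = 1 := by
          simp [cB, hval, hvalfix]
        rw [hLHS, dsgn_some, one_mul]
        rw [ch_fixed σ₀ htriv₁ (div_ne_zero ha0 hD0) (fix_div σ₀ ha hDfix),
          ch_fixed σ₀ htriv₂ hD0 hDfix, mul_one]
    · -- non-rational t : both sides are 0
      have hRHS : cB σ₀ (some t) = 0 := by simp [cB, hfix]
      rw [hRHS, mul_zero]
      obtain ⟨hD0, hnf⟩ := gl_nonfixed σ₀ hss ha hb (fix_zero σ₀) (fix_one σ₀)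
        (by simpa using ha0) hfix
      rw [add_zero] at hnf
      rw [act, hC, hD, if_neg hD0]
      simp only [cB]
      rw [if_neg (fun hcon => hnf hcon.2)]
  | none =>
    have hRHS : cB σ₀ none = 1 := rfl
    rw [hRHS, mul_one, act, Aco, hCn, hDn, hdet, dsgn_none]
    rcases eq_or_ne b 0 with rfl | hb0
    · rw [if_pos rfl, if_pos rfl]
      have harg : -(-1 * a) / a = 1 := by field_simp
      rw [harg, ch_one, one_mul, ch_fixed σ₀ htriv₂ ha0 ha]
      rfl
    · rw [if_neg hb0, if_neg hb0]
      have hvalfix : σ₀ (a / b) = a / b := fix_div σ₀ ha hb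
      have hval : a / b ≠ 0 := div_ne_zero ha0 hb0
      have hLHS : cB σ₀ (some (a / b)) = 1 := by simp [cB, hval, hvalfix]
      rw [hLHS]
      rw [ch_fixed σ₀ htriv₁ (div_ne_zero (by simpa using ha0) hb0)
        (fix_div σ₀ (by rw [neg_one_mul]; exact fix_neg σ₀ ha) hb),
        ch_fixed σ₀ htriv₂ hb0 hb, mul_one]

lemma cC_rel {χ₁ χ₂ : Eˣ →* ℂˣ} (hss : ∀ x : E, σ₀ (σ₀ x) = x)
    (htriv₂ : ∀ x : Eˣ, σ₀ (x : E) = (x : E) → χ₂ x = 1)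
    {h : GL (Fin 2) E} (hh : h ∈ mirabF σ₀) (z : Option E) :
    cC σ₀ χ₁ χ₂ (act z h) = Aco χ₁ χ₂ z h * cC σ₀ χ₁ χ₂ z := by
  obtain ⟨a, b, ha, hb, ha0, hC, hD, hCn, hDn, hdet⟩ := mirab_data σ₀ hh
  match z with
  | some t =>
    rcases eq_or_ne (σ₀ t) t with hfix | hfix
    · -- rational t : both sides are 0
      have hRHS : cC σ₀ χ₁ χ₂ (some t) = 0 := by simp [cC, hfix]
      rw [hRHS, mul_zero, act, hC, hD]
      split_ifs with hD0
      · rfl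
      · have hvalfix : σ₀ (t * a / (t * b + 1)) = t * a / (t * b + 1) :=
          fix_div σ₀ (fix_mul σ₀ hfix ha)
            (fix_add σ₀ (fix_mul σ₀ hfix hb) (fix_one σ₀))
        simp [cC, hvalfix]
    · -- non-rational t
      have ht0 : t ≠ 0 := by rintro rfl; exact hfix (fix_zero σ₀)
      obtain ⟨hD0, hnf⟩ := gl_nonfixed σ₀ hss ha hb (fix_zero σ₀) (fix_one σ₀)
        (by simpa using ha0) hfix
      rw [add_zero] at hnf
      rw [act, Aco, hC, hD, if_neg hD0, if_neg hD0, hdet, dsgn_some, one_mul]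
      have hLHS : cC σ₀ χ₁ χ₂ (some (t * a / (t * b + 1))) =
          ch χ₁ (t * a / (t * b + 1)) * (ch χ₂ (t * a / (t * b + 1)))⁻¹ := by
        simp only [cC]
        rw [if_pos hnf]
      rw [hLHS]
      have hRHS : cC σ₀ χ₁ χ₂ (some t) = ch χ₁ t * (ch χ₂ t)⁻¹ := by
        simp only [cC]
        rw [if_pos hfix]
      rw [hRHS]
      have hca2 : ch χ₂ a = 1 := ch_fixed σ₀ htriv₂ ha0 ha
      rw [ch_div, ch_div, ch_mul, ch_mul, hca2, ch_div]
      have n1 : ch χ₁ t ≠ 0 := ch_ne_zero χ₁ ht0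
      have n2 : ch χ₂ t ≠ 0 := ch_ne_zero χ₂ ht0
      have n3 : ch χ₁ a ≠ 0 := ch_ne_zero χ₁ ha0
      have n4 : ch χ₁ (t*b+1) ≠ 0 := ch_ne_zero χ₁ hD0
      have n5 : ch χ₂ (t*b+1) ≠ 0 := ch_ne_zero χ₂ hD0
      field_simp
  | none =>
    have hRHS : cC σ₀ χ₁ χ₂ (none : Option E) = 0 := rfl
    rw [hRHS, mul_zero, act, hCn, hDn]
    split_ifs with hD0
    · rfl
    · have hvalfix : σ₀ (a / b) = a / b := fix_div σ₀ ha hb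
      simp [cC, hvalfix]

lemma glF_det_fix (σ₀ : E ≃+* E) {h : GL (Fin 2) E} (hh : h ∈ glF σ₀) :
    σ₀ ((h : Matrix (Fin 2) (Fin 2) E).det) = (h : Matrix (Fin 2) (Fin 2) E).det := by
  rw [Matrix.det_fin_two, map_sub, fix_mul σ₀ (hh 0 0) (hh 1 1), fix_mul σ₀ (hh 0 1) (hh 1 0)]

lemma cG_rel {χ₁ χ₂ : Eˣ →* ℂˣ} (hss : ∀ x : E, σ₀ (σ₀ x) = x)
    (htriv₁ : ∀ x : Eˣ, σ₀ (x : E) = (x : E) → χ₁ x = 1)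
    (htriv₂ : ∀ x : Eˣ, σ₀ (x : E) = (x : E) → χ₂ x = 1)
    {h : GL (Fin 2) E} (hh : h ∈ glF σ₀) (z : Option E) :
    cG σ₀ (act z h) = Aco χ₁ χ₂ z h * cG σ₀ z := by
  have hp := hh 0 0
  have hr := hh 0 1
  have hs := hh 1 0
  have hu := hh 1 1
  have hdetfix := glF_det_fix σ₀ hh
  have hdet0 : (h : Matrix (Fin 2) (Fin 2) E).det ≠ 0 := gl_det_ne_zero h
  match z with
  | some t =>
    have hCv : rowC (some t) h =
        t * (h : Matrix (Fin 2) (Fin 2) E) 0 0 + (h : Matrix (Fin 2) (Fin 2) E) 1 0 := rfl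
    have hDv : rowD (some t) h =
        t * (h : Matrix (Fin 2) (Fin 2) E) 0 1 + (h : Matrix (Fin 2) (Fin 2) E) 1 1 := rfl
    rcases eq_or_ne (σ₀ t) t with hfix | hfix
    · have hCfix : σ₀ (rowC (some t) h) = rowC (some t) h := by
        rw [hCv]; exact fix_add σ₀ (fix_mul σ₀ hfix hp) hs
      have hDfix : σ₀ (rowD (some t) h) = rowD (some t) h := by
        rw [hDv]; exact fix_add σ₀ (fix_mul σ₀ hfix hr) hu
      have hRHS : cG σ₀ (some t) = 1 := by simp [cG, hfix]
      rw [hRHS, mul_one, act, Aco]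
      split_ifs with hD0
      · have hC0 : rowC (some t) h ≠ 0 := rowC_ne_zero _ _ hD0
        show cG σ₀ none = _
        rw [dsgn_some, one_mul,
          ch_fixed σ₀ htriv₁ (div_ne_zero (neg_ne_zero.2 hdet0) hC0)
            (fix_div σ₀ (fix_neg σ₀ hdetfix) hCfix),
          ch_fixed σ₀ htriv₂ hC0 hCfix, mul_one]
        rfl
      · have hvalfix : σ₀ (rowC (some t) h / rowD (some t) h) =
            rowC (some t) h / rowD (some t) h := fix_div σ₀ hCfix hDfix
        have hLHS : cG σ₀ (some (rowC (some t) h / rowD (some t) h)) = 1 := by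
          simp [cG, hvalfix]
        rw [hLHS, dsgn_some, one_mul,
          ch_fixed σ₀ htriv₁ (div_ne_zero hdet0 hD0) (fix_div σ₀ hdetfix hDfix),
          ch_fixed σ₀ htriv₂ hD0 hDfix, mul_one]
    · have hRHS : cG σ₀ (some t) = 0 := by simp [cG, hfix]
      rw [hRHS, mul_zero]
      have hdet2 : (h : Matrix (Fin 2) (Fin 2) E) 0 0 * (h : Matrix (Fin 2) (Fin 2) E) 1 1 -
          (h : Matrix (Fin 2) (Fin 2) E) 0 1 * (h : Matrix (Fin 2) (Fin 2) E) 1 0 ≠ 0 := by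
        rw [← Matrix.det_fin_two]; exact hdet0
      obtain ⟨hD0, hnf⟩ := gl_nonfixed σ₀ hss hp hr hs hu hdet2 hfix
      rw [act, hDv, hCv, if_neg hD0]
      simp only [cG]
      exact if_neg hnf
  | none =>
    have hCv : rowC (none : Option E) h = (h : Matrix (Fin 2) (Fin 2) E) 0 0 := rfl
    have hDv : rowD (none : Option E) h = (h : Matrix (Fin 2) (Fin 2) E) 0 1 := rfl
    have hRHS : cG σ₀ (none : Option E) = 1 := rfl
    rw [hRHS, mul_one, act, Aco]
    split_ifs with hD0
    · have hC0 : rowC (none : Option E) h ≠ 0 := rowC_ne_zero _ _ hD0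
      have hCfix : σ₀ (rowC (none : Option E) h) = rowC (none : Option E) h := by
        rw [hCv]; exact hp
      have harg : -(dsgn (none : Option E) * (h : Matrix (Fin 2) (Fin 2) E).det) =
          (h : Matrix (Fin 2) (Fin 2) E).det := by
        rw [dsgn_none]; ring
      rw [harg,
        ch_fixed σ₀ htriv₁ (div_ne_zero hdet0 hC0) (fix_div σ₀ hdetfix hCfix),
        ch_fixed σ₀ htriv₂ hC0 hCfix, mul_one]
      rfl
    · have hDfix : σ₀ (rowD (none : Option E) h) = rowD (none : Option E) h := by
        rw [hDv]; exact hr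
      have hCfix : σ₀ (rowC (none : Option E) h) = rowC (none : Option E) h := by
        rw [hCv]; exact hp
      have hvalfix : σ₀ (rowC (none : Option E) h / rowD (none : Option E) h) =
          rowC (none : Option E) h / rowD (none : Option E) h := fix_div σ₀ hCfix hDfix
      have hLHS : cG σ₀ (some (rowC (none : Option E) h / rowD (none : Option E) h)) = 1 := by
        simp [cG, hvalfix]
      have harg : dsgn (none : Option E) * (h : Matrix (Fin 2) (Fin 2) E).det =
          -((h : Matrix (Fin 2) (Fin 2) E).det) := by
        rw [dsgn_none]; ring
      rw [hLHS, harg,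
        ch_fixed σ₀ htriv₁ (div_ne_zero (neg_ne_zero.2 hdet0) hD0)
          (fix_div σ₀ (fix_neg σ₀ hdetfix) hDfix),
        ch_fixed σ₀ htriv₂ hD0 hDfix, mul_one]

lemma fix_inv (σ₀ : E ≃+* E) {x : E} (hx : σ₀ x = x) : σ₀ x⁻¹ = x⁻¹ := by
  rw [map_inv₀, hx]

lemma nonfixed_inv (σ₀ : E ≃+* E) {x : E} (hx : σ₀ x ≠ x) : σ₀ x⁻¹ ≠ x⁻¹ := by
  intro hcon
  rw [map_inv₀] at hcon
  exact hx (inv_injective hcon)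

lemma nonfixed_ne_zero (σ₀ : E ≃+* E) {x : E} (hx : σ₀ x ≠ x) : x ≠ 0 := by
  rintro rfl; exact hx (map_zero σ₀)

lemma exists_transporter (σ₀ : E ≃+* E) (hss : ∀ x : E, σ₀ (σ₀ x) = x) {δ t : E}
    (hδ : σ₀ δ ≠ δ) (ht : σ₀ t ≠ t) :
    ∃ a b : E, σ₀ a = a ∧ σ₀ b = b ∧ a ≠ 0 ∧ δ * b + 1 ≠ 0 ∧ t = δ * a / (δ * b + 1) := by
  have hδ0 : δ ≠ 0 := nonfixed_ne_zero σ₀ hδ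
  have ht0 : t ≠ 0 := nonfixed_ne_zero σ₀ ht
  obtain ⟨c, e, hc, he, hue⟩ := sigma_basis σ₀ hss (nonfixed_inv σ₀ hδ) t⁻¹
  have hc0 : c ≠ 0 := by
    rintro rfl
    rw [zero_mul, zero_add] at hue
    apply nonfixed_inv σ₀ ht
    rw [hue, he]
  have hkey : c + δ * e ≠ 0 := by
    intro h0
    have h1 : δ * t⁻¹ = c + δ * e := by
      rw [hue]; field_simp
    rw [h0] at h1
    exact (mul_ne_zero hδ0 (inv_ne_zero ht0)) h1
  have hcomp : (δ * (e * c⁻¹) + 1) * c = c + δ * e := by field_simp; ring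
  have hD' : δ * (e * c⁻¹) + 1 ≠ 0 := by
    intro h0
    apply hkey
    rw [h0, zero_mul] at hcomp
    exact hcomp.symm
  have h2 : δ * t⁻¹ = c + δ * e := by rw [hue]; field_simp
  have h3 : t * (c + δ * e) = δ := by
    rw [← h2, mul_comm δ t⁻¹, ← mul_assoc, mul_inv_cancel₀ ht0, one_mul]
  refine ⟨c⁻¹, e * c⁻¹, fix_inv σ₀ hc, fix_mul σ₀ he (fix_inv σ₀ hc), inv_ne_zero hc0, hD', ?_⟩
  rw [eq_div_iff hD']
  have h4 : t * (δ * (e * c⁻¹) + 1) = t * (c + δ * e) * c⁻¹ := by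
    rw [← hcomp]
    field_simp
  rw [h4, h3]

lemma borel_mem_mirab (σ₀ : E ≃+* E) {a : E} (ha : a ≠ 0) {b : E} (hfa : σ₀ a = a)
    (hfb : σ₀ b = b) : borel (Units.mk0 a ha) 1 b ∈ mirabF σ₀ := by
  refine ⟨?_, ?_, ?_⟩
  · intro i j
    fin_cases i <;> fin_cases j <;>
      simp [borel] <;> first | exact hfa | exact hfb | exact map_zero σ₀ | exact map_one σ₀
  · simp [borel]
  · simp [borel]

lemma borel_det (a d : Eˣ) (x : E) :
    ((borel a d x : GL (Fin 2) E) : Matrix (Fin 2) (Fin 2) E).det = (a : E) * (d : E) := by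
  rw [borel_val, Matrix.det_fin_two]
  simp

lemma rowC_none_borel (a d : Eˣ) (x : E) : rowC (none : Option E) (borel a d x) = (a : E) := rfl
lemma rowD_none_borel (a d : Eˣ) (x : E) : rowD (none : Option E) (borel a d x) = x := rfl
lemma rowC_some_borel (t : E) (a d : Eˣ) (x : E) :
    rowC (some t) (borel a d x) = t * (a : E) := by
  show t * _ + _ = _
  rw [borel_val]
  norm_num
lemma rowD_some_borel (t : E) (a d : Eˣ) (x : E) :
    rowD (some t) (borel a d x) = t * x + (d : E) := by
  show t * _ + _ = _
  rw [borel_val]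
  norm_num

section witnesses
variable {σ₀ : E ≃+* E} {χ₁ χ₂ : Eˣ →* ℂˣ}

/-- Transitivity on the rational orbit for the mirabolic group. -/
lemma mirab_wit1 {L : ↥(psSpace χ₁ χ₂) →ₗ[ℂ] ℂ}
    (hL : L ∈ invariantForms (psRep χ₁ χ₂) (mirabF σ₀))
    (htriv₁ : ∀ x : Eˣ, σ₀ (x : E) = (x : E) → χ₁ x = 1)
    {t : E} (ht : t ≠ 0) (hfix : σ₀ t = t) :
    L (eV χ₁ χ₂ (some t)) = L (eV χ₁ χ₂ none) := by
  have hmem : borel (Units.mk0 t ht) 1 (1 : E) ∈ mirabF σ₀ :=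
    borel_mem_mirab σ₀ ht hfix (map_one σ₀)
  have hrel := invariant_rel hL hmem none
  have hact : act none (borel (Units.mk0 t ht) 1 (1 : E)) = some t := by
    rw [act, rowD_none_borel, if_neg one_ne_zero, rowC_none_borel]
    norm_num
  have hAco : Aco χ₁ χ₂ none (borel (Units.mk0 t ht) 1 (1 : E)) = 1 := by
    rw [Aco, rowD_none_borel, if_neg one_ne_zero, borel_det, dsgn_none, ch_one]
    have harg : (-1 : E) * ((Units.mk0 t ht : E) * ((1 : Eˣ) : E)) / 1 = -t := by
      norm_num
    rw [harg, mul_one, ch_fixed σ₀ htriv₁ (neg_ne_zero.2 ht) (fix_neg σ₀ hfix)]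
  rw [hact, hAco, one_mul] at hrel
  exact hrel

/-- Transitivity on the non-rational orbit for the mirabolic group. -/
lemma mirab_wit2 {L : ↥(psSpace χ₁ χ₂) →ₗ[ℂ] ℂ}
    (hL : L ∈ invariantForms (psRep χ₁ χ₂) (mirabF σ₀))
    (hss : ∀ x : E, σ₀ (σ₀ x) = x)
    (htriv₂ : ∀ x : Eˣ, σ₀ (x : E) = (x : E) → χ₂ x = 1)
    {δ t : E} (hδ : σ₀ δ ≠ δ) (ht : σ₀ t ≠ t) :
    L (eV χ₁ χ₂ (some t)) =
      ch χ₁ t * (ch χ₂ t)⁻¹ * (ch χ₂ δ * (ch χ₁ δ)⁻¹) * L (eV χ₁ χ₂ (some δ)) := by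
  have hδ0 : δ ≠ 0 := nonfixed_ne_zero σ₀ hδ
  have ht0 : t ≠ 0 := nonfixed_ne_zero σ₀ ht
  obtain ⟨a, b, hfa, hfb, ha0, hD0, hteq⟩ := exists_transporter σ₀ hss hδ ht
  have hmem : borel (Units.mk0 a ha0) 1 b ∈ mirabF σ₀ := borel_mem_mirab σ₀ ha0 hfa hfb
  have hrel := invariant_rel hL hmem (some δ)
  have hact : act (some δ) (borel (Units.mk0 a ha0) 1 b) = some t := by
    rw [act, rowD_some_borel, rowC_some_borel]
    show (if δ * b + ((1:Eˣ):E) = 0 then _ else _) = _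
    rw [Units.val_one, if_neg hD0]
    exact congrArg some hteq.symm
  have hAco : Aco χ₁ χ₂ (some δ) (borel (Units.mk0 a ha0) 1 b) =
      ch χ₁ t * (ch χ₂ t)⁻¹ * (ch χ₂ δ * (ch χ₁ δ)⁻¹) := by
    rw [Aco, rowD_some_borel, rowC_some_borel]
    show (if δ * b + ((1:Eˣ):E) = 0 then _ else _) = _
    rw [Units.val_one, if_neg hD0, borel_det, dsgn_some]
    have harg : (1 : E) * ((Units.mk0 a ha0 : E) * ((1:Eˣ) : E)) / (δ * b + 1) =
        a / (δ * b + 1) := by norm_num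
    rw [harg]
    have hca2 : ch χ₂ a = 1 := ch_fixed σ₀ htriv₂ ha0 hfa
    have e1 : ch χ₁ t = ch χ₁ δ * ch χ₁ a / ch χ₁ (δ * b + 1) := by
      rw [hteq, ch_div, ch_mul]
    have e2 : ch χ₂ t = ch χ₂ δ / ch χ₂ (δ * b + 1) := by
      rw [hteq, ch_div, ch_mul, hca2, mul_one]
    rw [e1, e2, ch_div]
    have n1 : ch χ₁ δ ≠ 0 := ch_ne_zero χ₁ hδ0
    have n2 : ch χ₂ δ ≠ 0 := ch_ne_zero χ₂ hδ0
    have n3 : ch χ₁ a ≠ 0 := ch_ne_zero χ₁ ha0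
    have n4 : ch χ₁ (δ * b + 1) ≠ 0 := ch_ne_zero χ₁ hD0
    have n5 : ch χ₂ (δ * b + 1) ≠ 0 := ch_ne_zero χ₂ hD0
    field_simp
  rw [hact, hAco] at hrel
  exact hrel

/-- The rotation-like element `!![t,1;-1,0]`. -/
def gEl (t : E) : GL (Fin 2) E :=
  ⟨!![t, 1; -1, 0], !![0, -1; 1, t],
   by rw [mul_fin_two, one_fin_two]; norm_num,
   by rw [mul_fin_two, one_fin_two]; norm_num⟩

@[simp] lemma gEl_val (t : E) :
    ((gEl t : GL (Fin 2) E) : Matrix (Fin 2) (Fin 2) E) = !![t, 1; -1, 0] := rfl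

lemma gEl_mem (t : E) (hfix : σ₀ t = t) : gEl t ∈ glF σ₀ := by
  intro i j
  fin_cases i <;> fin_cases j <;> simp [gEl] <;>
    first
      | exact hfix
      | exact map_one σ₀
      | exact map_zero σ₀
      | (rw [map_neg, map_one])

/-- Transitivity on `P¹(F)` for `GL₂(F)`. -/
lemma glF_wit1 {L : ↥(psSpace χ₁ χ₂) →ₗ[ℂ] ℂ}
    (hL : L ∈ invariantForms (psRep χ₁ χ₂) (glF σ₀))
    (htriv₁ : ∀ x : Eˣ, σ₀ (x : E) = (x : E) → χ₁ x = 1)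
    {t : E} (hfix : σ₀ t = t) :
    L (eV χ₁ χ₂ (some t)) = L (eV χ₁ χ₂ none) := by
  have hrel := invariant_rel hL (gEl_mem t hfix) none
  have hCv : rowC (none : Option E) (gEl t) = t := rfl
  have hDv : rowD (none : Option E) (gEl t) = 1 := rfl
  have hdet : ((gEl t : GL (Fin 2) E) : Matrix (Fin 2) (Fin 2) E).det = 1 := by
    rw [gEl_val, Matrix.det_fin_two]; norm_num
  have hact : act none (gEl t) = some t := by
    rw [act, hDv, if_neg one_ne_zero, hCv, div_one]
  have hAco : Aco χ₁ χ₂ none (gEl t) = 1 := by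
    rw [Aco, hDv, if_neg one_ne_zero, hdet, dsgn_none]
    norm_num [ch_one]
    exact ch_fixed σ₀ htriv₁ (by norm_num) (by rw [map_neg, _root_.map_one])
  rw [hact, hAco, one_mul] at hrel
  exact hrel

/-- The torus stabilizer kills coefficients on the non-rational orbit for `GL₂(F)`. -/
lemma glF_kill {L : ↥(psSpace χ₁ χ₂) →ₗ[ℂ] ℂ}
    (hL : L ∈ invariantForms (psRep χ₁ χ₂) (glF σ₀))
    (hss : ∀ x : E, σ₀ (σ₀ x) = x)
    (htriv₁ : ∀ x : Eˣ, σ₀ (x : E) = (x : E) → χ₁ x = 1)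
    {μ0 : Eˣ} (hμ0 : χ₁ μ0 ≠ χ₂ μ0)
    {t : E} (ht : σ₀ t ≠ t) :
    L (eV χ₁ χ₂ (some t)) = 0 := by
  set μ : E := (μ0 : E) with hμ
  have hμne : μ ≠ 0 := μ0.ne_zero
  have hσμne : σ₀ μ ≠ 0 := sigma_ne_zero σ₀ hμne
  have htsub : σ₀ t - t ≠ 0 := sub_ne_zero.2 ht
  obtain ⟨r, u, hfr, hfu, hmu⟩ := sigma_basis σ₀ hss ht μ
  obtain ⟨p, s, hfp, hfs, hmut⟩ := sigma_basis σ₀ hss ht (μ * t)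
  -- σ-conjugates of the defining relations
  have e3 : σ₀ μ * σ₀ t = p * σ₀ t + s := by
    have := congrArg σ₀ hmut
    rwa [_root_.map_mul, map_add, _root_.map_mul, hfp, hfs] at this
  have e4 : σ₀ μ = r * σ₀ t + u := by
    have := congrArg σ₀ hmu
    rwa [map_add, _root_.map_mul, hfr, hfu] at this
  -- determinant computation via the eigen matrix
  have hMmul : !![t, 1; σ₀ t, 1] * !![p, r; s, u] =
      !![μ * t, μ; σ₀ μ * σ₀ t, σ₀ μ] := by
    ext i j
    fin_cases i <;> fin_cases j <;> simp [Matrix.mul_apply, Fin.sum_univ_two]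
    · linear_combination -hmut
    · linear_combination -hmu
    · linear_combination -e3
    · linear_combination -e4
  have hdet : (!![p, r; s, u] : Matrix (Fin 2) (Fin 2) E).det = μ * σ₀ μ := by
    have h5 := congrArg Matrix.det hMmul
    rw [Matrix.det_mul, Matrix.det_fin_two, Matrix.det_fin_two] at h5
    simp at h5
    have h6 : t - σ₀ t ≠ 0 := sub_ne_zero.2 fun hc => ht hc.symm
    have h7 : (!![p, r; s, u] : Matrix (Fin 2) (Fin 2) E).det = p * u - r * s := by
      rw [Matrix.det_fin_two]; simp
    rw [h7]
    apply mul_left_cancel₀ h6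
    linear_combination h5
  have hdetne : (!![p, r; s, u] : Matrix (Fin 2) (Fin 2) E).det ≠ 0 := by
    rw [hdet]; exact mul_ne_zero hμne hσμne
  set h : GL (Fin 2) E := Matrix.GeneralLinearGroup.mkOfDetNeZero _ hdetne with hh
  have hval : (h : Matrix (Fin 2) (Fin 2) E) = !![p, r; s, u] := rfl
  have hmem : h ∈ glF σ₀ := by
    intro i j
    rw [hval]
    fin_cases i <;> fin_cases j <;> simp only [Matrix.cons_val', Matrix.cons_val_zero,
      Matrix.cons_val_one, Matrix.head_cons, Matrix.empty_val', Matrix.cons_val_fin_one,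
      Matrix.head_fin_const] <;> assumption
  have hCv : rowC (some t) h = μ * t := by
    show t * (h : Matrix (Fin 2) (Fin 2) E) 0 0 + (h : Matrix (Fin 2) (Fin 2) E) 1 0 = μ * t
    rw [hval]
    simp
    linear_combination -hmut
  have hDv : rowD (some t) h = μ := by
    show t * (h : Matrix (Fin 2) (Fin 2) E) 0 1 + (h : Matrix (Fin 2) (Fin 2) E) 1 1 = μ
    rw [hval]
    simp
    linear_combination -hmu
  have hact : act (some t) h = some t := by
    rw [act, hDv, if_neg hμne, hCv, mul_comm μ t, mul_div_assoc, div_self hμne, mul_one]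
  have hAco : Aco χ₁ χ₂ (some t) h = (ch χ₁ μ)⁻¹ * ch χ₂ μ := by
    rw [Aco, hDv, if_neg hμne, dsgn_some, one_mul]
    have hdet2 : (h : Matrix (Fin 2) (Fin 2) E).det = μ * σ₀ μ := by rw [hval]; exact hdet
    rw [hdet2]
    have harg : μ * σ₀ μ / μ = σ₀ μ := by
      rw [mul_comm, mul_div_assoc, div_self hμne, mul_one]
    rw [harg, ch_sigma σ₀ hss htriv₁ hμne]
  have hrel := invariant_rel hL hmem (some t)
  rw [hact, hAco] at hrel
  have hAne : (ch χ₁ μ)⁻¹ * ch χ₂ μ ≠ 1 := by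
    intro hcon
    apply hμ0
    have hc1 : ch χ₁ μ ≠ 0 := ch_ne_zero χ₁ hμne
    rw [inv_mul_eq_one₀ hc1] at hcon
    apply Units.ext
    have h1 : ch χ₁ (μ0 : E) = ((χ₁ μ0 : ℂˣ) : ℂ) := ch_unit χ₁ μ0
    have h2 : ch χ₂ (μ0 : E) = ((χ₂ μ0 : ℂˣ) : ℂ) := ch_unit χ₂ μ0
    rw [← h1, ← h2]
    exact hcon
  have hzero : (1 - (ch χ₁ μ)⁻¹ * ch χ₂ μ) * L (eV χ₁ χ₂ (some t)) = 0 := by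
    linear_combination hrel
  rcases mul_eq_zero.1 hzero with hc | hc
  · exact absurd (sub_eq_zero.1 hc).symm hAne
  · exact hc
end witnesses

section spans
variable {σ₀ : E ≃+* E} {χ₁ χ₂ : Eˣ →* ℂˣ}

lemma Lc_comb (c1 c2 c3 : Option E → ℂ) (α β γ : ℂ) :
    Lc χ₁ χ₂ (fun z => α * c1 z + β * c2 z + γ * c3 z)
      = α • Lc χ₁ χ₂ c1 + β • Lc χ₁ χ₂ c2 + γ • Lc χ₁ χ₂ c3 := by
  apply LinearMap.ext; intro f
  simp only [LinearMap.add_apply, LinearMap.smul_apply, Lc_apply, smul_eq_mul, Finset.mul_sum]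
  rw [← Finset.sum_add_distrib, ← Finset.sum_add_distrib]
  exact Finset.sum_congr rfl fun z _ => by ring

lemma Lc_smul1 (c : Option E → ℂ) (α : ℂ) :
    Lc χ₁ χ₂ (fun z => α * c z) = α • Lc χ₁ χ₂ c := by
  apply LinearMap.ext; intro f
  simp only [LinearMap.smul_apply, Lc_apply, smul_eq_mul, Finset.mul_sum]
  exact Finset.sum_congr rfl fun z _ => by ring

lemma exists_ne_unit (hne : χ₁ ≠ χ₂) : ∃ u : Eˣ, χ₁ u ≠ χ₂ u := by
  by_contra hc
  push_neg at hc
  exact hne (MonoidHom.ext hc)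

theorem mirab_forms (hss : ∀ x : E, σ₀ (σ₀ x) = x)
    (htriv₁ : ∀ x : Eˣ, σ₀ (x : E) = (x : E) → χ₁ x = 1)
    (htriv₂ : ∀ x : Eˣ, σ₀ (x : E) = (x : E) → χ₂ x = 1)
    (hex : ∃ δ : E, σ₀ δ ≠ δ) :
    invariantForms (psRep χ₁ χ₂) (mirabF σ₀) =
      Submodule.span ℂ (Set.range ![Lc χ₁ χ₂ cA, Lc χ₁ χ₂ (cB σ₀),
        Lc χ₁ χ₂ (cC σ₀ χ₁ χ₂)]) := by
  apply le_antisymm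
  · intro L hL
    obtain ⟨δ₀, hδ₀⟩ := hex
    have hδ00 : δ₀ ≠ 0 := nonfixed_ne_zero σ₀ hδ₀
    set c : Option E → ℂ := fun z => L (eV χ₁ χ₂ z) with hcdef
    have hLc : L = Lc χ₁ χ₂ c := L_eq_Lc L
    have hcs : c = fun z => c (some 0) * cA z + c none * cB σ₀ z +
        (c (some δ₀) * ch χ₂ δ₀ * (ch χ₁ δ₀)⁻¹) * cC σ₀ χ₁ χ₂ z := by
      funext z
      match z with
      | none => simp [cA, cB, cC]
      | some t =>
        rcases eq_or_ne t 0 with rfl | ht0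
        · have hz : σ₀ (0 : E) = 0 := fix_zero σ₀
          simp [cA, cB, cC, hz]
        rcases eq_or_ne (σ₀ t) t with hfix | hfix
        · have h1 : c (some t) = c none := mirab_wit1 hL htriv₁ ht0 hfix
          simp only [cA, cB, cC]
          rw [if_neg (by simpa using ht0), if_pos ⟨ht0, hfix⟩,
            if_neg (by simp [hfix])]
          rw [h1]; ring
        · have h2 : c (some t) = ch χ₁ t * (ch χ₂ t)⁻¹ * (ch χ₂ δ₀ * (ch χ₁ δ₀)⁻¹) *
              c (some δ₀) := mirab_wit2 hL hss htriv₂ hδ₀ hfix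
          simp only [cA, cB, cC]
          rw [if_neg (by simpa using ht0), if_neg (fun hc0 => hfix hc0.2), if_pos hfix]
          rw [h2]; ring
    rw [hLc, hcs, Lc_comb]
    refine Submodule.add_mem _ (Submodule.add_mem _ ?_ ?_) ?_
    · exact Submodule.smul_mem _ _ (Submodule.subset_span ⟨0, rfl⟩)
    · exact Submodule.smul_mem _ _ (Submodule.subset_span ⟨1, rfl⟩)
    · exact Submodule.smul_mem _ _ (Submodule.subset_span ⟨2, rfl⟩)
  · rw [Submodule.span_le]
    rintro x ⟨i, rfl⟩
    fin_cases i
    · exact Lc_invariant (fun h hh z => cA_rel htriv₁ hh z)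
    · exact Lc_invariant (fun h hh z => cB_rel hss htriv₁ htriv₂ hh z)
    · exact Lc_invariant (fun h hh z => cC_rel hss htriv₂ hh z)

theorem mirab_rank (hss : ∀ x : E, σ₀ (σ₀ x) = x)
    (htriv₁ : ∀ x : Eˣ, σ₀ (x : E) = (x : E) → χ₁ x = 1)
    (htriv₂ : ∀ x : Eˣ, σ₀ (x : E) = (x : E) → χ₂ x = 1)
    (hex : ∃ δ : E, σ₀ δ ≠ δ) :
    Module.finrank ℂ ↥(invariantForms (psRep χ₁ χ₂) (mirabF σ₀)) = 3 := by
  rw [mirab_forms hss htriv₁ htriv₂ hex]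
  obtain ⟨δ₀, hδ₀⟩ := hex
  have hδ00 : δ₀ ≠ 0 := nonfixed_ne_zero σ₀ hδ₀
  have hli : LinearIndependent ℂ ![Lc χ₁ χ₂ cA, Lc χ₁ χ₂ (cB σ₀),
      Lc χ₁ χ₂ (cC σ₀ χ₁ χ₂)] := by
    rw [Fintype.linearIndependent_iff]
    intro g hg
    have heval : ∀ z : Option E, g 0 * cA z + g 1 * cB σ₀ z + g 2 * cC σ₀ χ₁ χ₂ z = 0 := by
      intro z
      have := congrArg (fun (L : ↥(psSpace χ₁ χ₂) →ₗ[ℂ] ℂ) => L (eV χ₁ χ₂ z)) hg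
      simp only [LinearMap.zero_apply] at this
      rw [Fin.sum_univ_three] at this
      simpa [Lc_eV, Matrix.cons_val_zero, Matrix.cons_val_one, Matrix.head_cons,
        smul_eq_mul] using this
    have h0 := heval (some 0)
    have h1 := heval none
    have h2 := heval (some δ₀)
    rw [show cA (some (0:E)) = 1 by simp [cA],
      show cB σ₀ (some (0:E)) = 0 by simp [cB],
      show cC σ₀ χ₁ χ₂ (some (0:E)) = 0 by simp [cC, fix_zero σ₀]] at h0
    rw [show cA (none : Option E) = 0 by simp [cA],
      show cB σ₀ (none : Option E) = 1 from rfl,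
      show cC σ₀ χ₁ χ₂ (none : Option E) = 0 from rfl] at h1
    rw [show cA (some δ₀) = 0 by simp [cA, hδ00],
      show cB σ₀ (some δ₀) = 0 by simp [cB, hδ₀],
      show cC σ₀ χ₁ χ₂ (some δ₀) = ch χ₁ δ₀ * (ch χ₂ δ₀)⁻¹ by simp [cC, hδ₀]] at h2
    have hg0 : g 0 = 0 := by linear_combination h0
    have hg1 : g 1 = 0 := by linear_combination h1
    have hg2 : g 2 = 0 := by
      have h2' : g 2 * (ch χ₁ δ₀ * (ch χ₂ δ₀)⁻¹) = 0 := by linear_combination h2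
      rcases mul_eq_zero.1 h2' with hc | hc
      · exact hc
      · exact absurd hc (mul_ne_zero (ch_ne_zero χ₁ hδ00)
          (inv_ne_zero (ch_ne_zero χ₂ hδ00)))
    intro i
    fin_cases i
    · exact hg0
    · exact hg1
    · exact hg2
  rw [finrank_span_eq_card hli]
  exact Fintype.card_fin 3

theorem glF_forms (hss : ∀ x : E, σ₀ (σ₀ x) = x)
    (htriv₁ : ∀ x : Eˣ, σ₀ (x : E) = (x : E) → χ₁ x = 1)
    (htriv₂ : ∀ x : Eˣ, σ₀ (x : E) = (x : E) → χ₂ x = 1)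
    (hne : χ₁ ≠ χ₂) :
    invariantForms (psRep χ₁ χ₂) (glF σ₀) =
      Submodule.span ℂ {Lc χ₁ χ₂ (cG σ₀)} := by
  obtain ⟨μ0, hμ0⟩ := exists_ne_unit hne
  apply le_antisymm
  · intro L hL
    set c : Option E → ℂ := fun z => L (eV χ₁ χ₂ z) with hcdef
    have hLc : L = Lc χ₁ χ₂ c := L_eq_Lc L
    have hcs : c = fun z => c none * cG σ₀ z := by
      funext z
      match z with
      | none => simp [cG]
      | some t =>
        rcases eq_or_ne (σ₀ t) t with hfix | hfix
        · simp only [cG]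
          rw [if_pos hfix, mul_one]
          exact glF_wit1 hL htriv₁ hfix
        · simp only [cG]
          rw [if_neg hfix, mul_zero]
          exact glF_kill hL hss htriv₁ hμ0 hfix
    rw [hLc, hcs, Lc_smul1]
    exact Submodule.smul_mem _ _ (Submodule.subset_span rfl)
  · rw [Submodule.span_le, Set.singleton_subset_iff]
    exact Lc_invariant (fun h hh z => cG_rel hss htriv₁ htriv₂ hh z)

theorem glF_rank (hss : ∀ x : E, σ₀ (σ₀ x) = x)
    (htriv₁ : ∀ x : Eˣ, σ₀ (x : E) = (x : E) → χ₁ x = 1)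
    (htriv₂ : ∀ x : Eˣ, σ₀ (x : E) = (x : E) → χ₂ x = 1)
    (hne : χ₁ ≠ χ₂) :
    Module.finrank ℂ ↥(invariantForms (psRep χ₁ χ₂) (glF σ₀)) = 1 := by
  rw [glF_forms hss htriv₁ htriv₂ hne]
  apply finrank_span_singleton
  intro h0
  have := congrArg (fun (L : ↥(psSpace χ₁ χ₂) →ₗ[ℂ] ℂ) => L (eV χ₁ χ₂ none)) h0
  simp only [LinearMap.zero_apply, Lc_eV] at this
  exact one_ne_zero (show (1:ℂ) = 0 from this)
end spans

section irred
variable {χ₁ χ₂ : Eˣ →* ℂˣ}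

lemma rowC_some_b1 (t : E) (d : Eˣ) (x : E) : rowC (some t) (borel 1 d x) = t := by
  rw [rowC_some_borel]; simp

lemma rowD_some_b1 (t : E) (d : Eˣ) (x : E) :
    rowD (some t) (borel 1 d x) = t * x + (d : E) := rowD_some_borel t 1 d x

lemma det_b1 (d : Eˣ) (x : E) :
    ((borel 1 d x : GL (Fin 2) E) : Matrix (Fin 2) (Fin 2) E).det = (d : E) := by
  rw [borel_det]; simp

lemma inner_sum_zero (hne : χ₁ ≠ χ₂) (w : E) (C : ℂ) :
    ∑ d : Eˣ, (ch χ₂ ((d : E)))⁻¹ * (ch χ₁ ((d : E) * w) * C) = 0 := by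
  have key : ∀ d : Eˣ, (ch χ₂ ((d : E)))⁻¹ * (ch χ₁ ((d : E) * w) * C) =
      (ch χ₁ (d : E) * (ch χ₂ (d : E))⁻¹) * (ch χ₁ w * C) := by
    intro d; rw [ch_mul]; ring
  rw [Finset.sum_congr rfl (fun d _ => key d), ← Finset.sum_mul, sum_char12 hne, zero_mul]

lemma avg_coord_zero (f : ↥(psSpace χ₁ χ₂)) :
    ∑ p : Eˣ × E, ((χ₂ p.1 : ℂˣ) : ℂ)⁻¹ *
      (f : GL (Fin 2) E → ℂ) (rp (some 0) * borel 1 p.1 p.2)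
    = (Fintype.card Eˣ : ℂ) * (Fintype.card E : ℂ) *
        (f : GL (Fin 2) E → ℂ) (rp (some 0)) := by
  have hterm : ∀ p : Eˣ × E, ((χ₂ p.1 : ℂˣ) : ℂ)⁻¹ *
      (f : GL (Fin 2) E → ℂ) (rp (some 0) * borel 1 p.1 p.2) =
      (f : GL (Fin 2) E → ℂ) (rp (some 0)) := by
    rintro ⟨d, x⟩
    rw [master f.2]
    have hD : rowD (some (0 : E)) (borel 1 d x) = (d : E) := by
      rw [rowD_some_b1]; ring
    rw [act, Aco, hD, if_neg d.ne_zero, if_neg d.ne_zero, rowC_some_b1, det_b1, dsgn_some,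
      zero_div]
    have harg : (1 : E) * (d : E) / (d : E) = 1 := by
      field_simp
    rw [harg, ch_one, one_mul, ch_unit]
    have hd2 : ((χ₂ d : ℂˣ) : ℂ) ≠ 0 := Units.ne_zero _
    field_simp
  rw [Finset.sum_congr rfl (fun p _ => hterm p), Finset.sum_const, Finset.card_univ,
    Fintype.card_prod]
  push_cast
  ring

lemma avg_coord_some (hne : χ₁ ≠ χ₂) (f : ↥(psSpace χ₁ χ₂)) {t : E} (ht : t ≠ 0) :
    ∑ p : Eˣ × E, ((χ₂ p.1 : ℂˣ) : ℂ)⁻¹ *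
      (f : GL (Fin 2) E → ℂ) (rp (some t) * borel 1 p.1 p.2) = 0 := by
  rw [Fintype.sum_prod_type]
  have hre : ∀ d : Eˣ, ∑ x : E, ((χ₂ d : ℂˣ) : ℂ)⁻¹ *
      (f : GL (Fin 2) E → ℂ) (rp (some t) * borel 1 d x) =
      ∑ e : E, (ch χ₂ ((d : E)))⁻¹ * (if e = 0
        then ch χ₁ ((d : E) * (-t⁻¹)) * (ch χ₂ t * (f : GL (Fin 2) E → ℂ) (rp none))
        else ch χ₁ ((d : E) * e⁻¹) * (ch χ₂ e * (f : GL (Fin 2) E → ℂ) (rp (some (t / e))))) := by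
    intro d
    apply Fintype.sum_bijective (fun x : E => t * x + (d : E))
    · constructor
      · intro x y hxy
        simp only at hxy
        exact mul_left_cancel₀ ht (add_right_cancel hxy)
      · intro e
        exact ⟨(e - (d : E)) / t, by field_simp; ring⟩
    · intro x
      rw [master f.2]
      rw [act, Aco, rowD_some_b1, rowC_some_b1, det_b1, dsgn_some]
      rw [ch_unit χ₂ d]
      rcases eq_or_ne (t * x + (d : E)) 0 with h0 | h0
      · rw [if_pos h0, if_pos h0, if_pos h0]
        have harg : -((1 : E) * (d : E)) / t = (d : E) * (-t⁻¹) := by ring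
        rw [harg]
        ring
      · rw [if_neg h0, if_neg h0, if_neg h0]
        have harg : (1 : E) * (d : E) / (t * x + (d : E)) =
            (d : E) * (t * x + (d : E))⁻¹ := by ring
        rw [harg]
        ring
  rw [Finset.sum_congr rfl (fun d _ => hre d), Finset.sum_comm]
  apply Finset.sum_eq_zero
  intro e _
  rcases eq_or_ne e 0 with rfl | he
  · simp only [if_pos rfl]
    exact inner_sum_zero hne _ _
  · simp only [if_neg he]
    exact inner_sum_zero hne _ _

lemma avg_coord_none (hne : χ₁ ≠ χ₂) (f : ↥(psSpace χ₁ χ₂)) :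
    ∑ p : Eˣ × E, ((χ₂ p.1 : ℂˣ) : ℂ)⁻¹ *
      (f : GL (Fin 2) E → ℂ) (rp none * borel 1 p.1 p.2) = 0 := by
  rw [Fintype.sum_prod_type, Finset.sum_comm]
  apply Finset.sum_eq_zero
  intro x _
  have hCv : ∀ d : Eˣ, rowC (none : Option E) (borel 1 d x) = 1 := by
    intro d; rw [rowC_none_borel]; simp
  have hDv : ∀ d : Eˣ, rowD (none : Option E) (borel 1 d x) = x := fun d => rfl
  have hterm : ∀ d : Eˣ, ((χ₂ d : ℂˣ) : ℂ)⁻¹ *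
      (f : GL (Fin 2) E → ℂ) (rp none * borel 1 d x) =
      (ch χ₂ ((d : E)))⁻¹ * (if x = 0
        then ch χ₁ ((d : E) * 1) * (1 * (f : GL (Fin 2) E → ℂ) (rp none))
        else ch χ₁ ((d : E) * (-x⁻¹)) * (ch χ₂ x * (f : GL (Fin 2) E → ℂ) (rp (some (1 / x))))) := by
    intro d
    rw [master f.2]
    rw [act, Aco, hDv d, hCv d, det_b1, dsgn_none, ch_unit χ₂ d]
    rcases eq_or_ne x 0 with rfl | hx
    · rw [if_pos rfl, if_pos rfl, if_pos rfl]
      have harg : -(-1 * (d : E)) / 1 = (d : E) * 1 := by ring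
      rw [harg, ch_one]
      ring
    · rw [if_neg hx, if_neg hx, if_neg hx]
      have harg : -1 * (d : E) / x = (d : E) * (-x⁻¹) := by ring
      rw [harg, one_div]
      ring
  rw [Finset.sum_congr rfl (fun d _ => hterm d)]
  rcases eq_or_ne x 0 with rfl | hx
  · simp only [if_pos rfl]
    exact inner_sum_zero hne _ _
  · simp only [if_neg hx]
    exact inner_sum_zero hne _ _

/-- The key averaging computation : the Borel-averaged vector is a multiple of `eV (some 0)`. -/
lemma avg_eq (hne : χ₁ ≠ χ₂) (f : ↥(psSpace χ₁ χ₂)) :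
    (∑ p : Eˣ × E, ((χ₂ p.1 : ℂˣ) : ℂ)⁻¹ • psRep χ₁ χ₂ (borel 1 p.1 p.2) f)
      = ((Fintype.card Eˣ : ℂ) * (Fintype.card E : ℂ) *
          (f : GL (Fin 2) E → ℂ) (rp (some 0))) • eV χ₁ χ₂ (some 0) := by
  set F2 := ∑ p : Eˣ × E, ((χ₂ p.1 : ℂˣ) : ℂ)⁻¹ • psRep χ₁ χ₂ (borel 1 p.1 p.2) f with hF2
  have hcoord : ∀ z : Option E, (F2 : GL (Fin 2) E → ℂ) (rp z) =
      ∑ p : Eˣ × E, ((χ₂ p.1 : ℂˣ) : ℂ)⁻¹ *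
        (f : GL (Fin 2) E → ℂ) (rp z * borel 1 p.1 p.2) := by
    intro z
    have := map_sum (evL χ₁ χ₂ z) (fun p : Eˣ × E =>
      ((χ₂ p.1 : ℂˣ) : ℂ)⁻¹ • psRep χ₁ χ₂ (borel 1 p.1 p.2) f) Finset.univ
    simp only [LinearMap.map_smul, smul_eq_mul] at this
    exact this
  rw [subtype_span F2]
  rw [Fintype.sum_option]
  rw [hcoord none, avg_coord_none hne f, zero_smul, zero_add]
  rw [Finset.sum_eq_single (0 : E)]
  · rw [hcoord (some 0), avg_coord_zero f]
  · intro t _ ht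
    rw [hcoord (some t), avg_coord_some hne f ht, zero_smul]
  · intro hmem; exact absurd (Finset.mem_univ _) hmem

lemma rho_e0_nmat (u : E) :
    psRep χ₁ χ₂ (nmat u) (eV χ₁ χ₂ (some 0)) = eV χ₁ χ₂ (some (-u)) := by
  have hact : act (some (-u)) (nmat u) = some 0 := by
    have hD : rowD (some (-u)) (nmat u) = 1 := by
      show -u * _ + _ = _
      rw [nmat_val]; simp
    have hC : rowC (some (-u)) (nmat u) = 0 := by
      show -u * _ + _ = _
      rw [nmat_val]; simp
    rw [act, hD, if_neg one_ne_zero, hC, zero_div]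
  have hAco : Aco χ₁ χ₂ (some (-u)) (nmat u) = 1 := by
    have hD : rowD (some (-u)) (nmat u) = 1 := by
      show -u * _ + _ = _
      rw [nmat_val]; simp
    have hdet : ((nmat u : GL (Fin 2) E) : Matrix (Fin 2) (Fin 2) E).det = 1 := by
      rw [nmat_val, Matrix.det_fin_two]; simp
    rw [Aco, hD, if_neg one_ne_zero, hdet, dsgn_some]
    norm_num [ch_one]
  have := rho_eV (χ₁ := χ₁) (χ₂ := χ₂) (nmat u) (some (-u))
  rw [hact, hAco, one_smul] at this
  exact this

lemma rho_e0_wmat :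
    psRep χ₁ χ₂ wmat (eV χ₁ χ₂ (some 0)) = eV χ₁ χ₂ (none : Option E) := by
  have hact : act (none : Option E) wmat = some 0 := by
    have hD : rowD (none : Option E) (wmat : GL (Fin 2) E) = 1 := rfl
    have hC : rowC (none : Option E) (wmat : GL (Fin 2) E) = 0 := rfl
    rw [act, hD, if_neg one_ne_zero, hC, zero_div]
  have hAco : Aco χ₁ χ₂ (none : Option E) wmat = 1 := by
    have hD : rowD (none : Option E) (wmat : GL (Fin 2) E) = 1 := rfl
    have hdet : ((wmat : GL (Fin 2) E) : Matrix (Fin 2) (Fin 2) E).det = -1 := by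
      rw [wmat_val, Matrix.det_fin_two]; simp
    rw [Aco, hD, if_neg one_ne_zero, hdet, dsgn_none]
    norm_num [ch_one]
  have := rho_eV (χ₁ := χ₁) (χ₂ := χ₂) wmat (none : Option E)
  rw [hact, hAco, one_smul] at this
  exact this

theorem ps_irred (hne : χ₁ ≠ χ₂) : IsIrreducibleRep (psRep χ₁ χ₂) := by
  constructor
  · refine ⟨eV χ₁ χ₂ (some 0), 0, fun hc => ?_⟩
    have h1 : (eV χ₁ χ₂ (some 0) : GL (Fin 2) E → ℂ) (rp (some 0)) = 1 := by
      show efun χ₁ χ₂ (some 0) (rp (some 0)) = 1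
      rw [efun_rp]; simp
    rw [hc] at h1
    simp at h1
  · intro S hS
    by_cases hbot : S = ⊥
    · exact Or.inl hbot
    right
    obtain ⟨f, hfS, hf0⟩ := Submodule.exists_mem_ne_zero_of_ne_bot hbot
    have hz : ∃ z : Option E, (f : GL (Fin 2) E → ℂ) (rp z) ≠ 0 := by
      by_contra hc
      push_neg at hc
      apply hf0
      rw [subtype_span f]
      rw [Finset.sum_congr rfl (fun z _ => by rw [hc z, zero_smul])]
      exact Finset.sum_const_zero
    obtain ⟨z₀, hz₀⟩ := hz
    set f1 := psRep χ₁ χ₂ (rp z₀) f with hf1def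
    have hf1S : f1 ∈ S := hS _ _ hfS
    have hf1c : (f1 : GL (Fin 2) E → ℂ) (rp (some 0)) = (f : GL (Fin 2) E → ℂ) (rp z₀) := by
      show (f : GL (Fin 2) E → ℂ) (rp (some 0) * rp z₀) = _
      have h2 : rp (some (0 : E)) = (1 : GL (Fin 2) E) := nmat_zero
      rw [h2, one_mul]
    have hsum : (∑ p : Eˣ × E, ((χ₂ p.1 : ℂˣ) : ℂ)⁻¹ •
        psRep χ₁ χ₂ (borel 1 p.1 p.2) f1) ∈ S :=
      Submodule.sum_mem _ (fun p _ => Submodule.smul_mem _ _ (hS _ _ hf1S))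
    rw [avg_eq hne f1] at hsum
    have hC : (Fintype.card Eˣ : ℂ) * (Fintype.card E : ℂ) *
        (f1 : GL (Fin 2) E → ℂ) (rp (some 0)) ≠ 0 := by
      refine mul_ne_zero (mul_ne_zero ?_ ?_) ?_
      · exact Nat.cast_ne_zero.2 Fintype.card_ne_zero
      · exact Nat.cast_ne_zero.2 Fintype.card_ne_zero
      · rw [hf1c]; exact hz₀
    have he0 : eV χ₁ χ₂ (some 0) ∈ S := by
      have h3 := Submodule.smul_mem S (((Fintype.card Eˣ : ℂ) * (Fintype.card E : ℂ) *
        (f1 : GL (Fin 2) E → ℂ) (rp (some 0)))⁻¹) hsum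
      rw [smul_smul, inv_mul_cancel₀ hC, one_smul] at h3
      exact h3
    have hallz : ∀ z : Option E, eV χ₁ χ₂ z ∈ S := by
      intro z
      match z with
      | some t =>
        have h4 := hS (nmat (-t)) _ he0
        rw [rho_e0_nmat (-t), neg_neg] at h4
        exact h4
      | none =>
        have h4 := hS wmat _ he0
        rw [rho_e0_wmat] at h4
        exact h4
    rw [Submodule.eq_top_iff']
    intro g
    rw [subtype_span g]
    exact Submodule.sum_mem _ (fun z _ => Submodule.smul_mem _ _ (hallz z))
end irred

theorem principal_series_ok_fails {q : ℕ} (hcard : Fintype.card E = q ^ 2)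
    (σ₀ : E ≃+* E) (hσ₀ : ∀ x : E, σ₀ x = x ^ q)
    (χ₁ χ₂ : Eˣ →* ℂˣ) (hne : χ₁ ≠ χ₂)
    (htriv₁ : ∀ x : Eˣ, σ₀ (x : E) = (x : E) → χ₁ x = 1)
    (htriv₂ : ∀ x : Eˣ, σ₀ (x : E) = (x : E) → χ₂ x = 1) :
    IsIrreducibleRep (psRep χ₁ χ₂) ∧
    Module.finrank ℂ ↥(invariantForms (psRep χ₁ χ₂) (glF σ₀)) = 1 ∧
    Module.finrank ℂ ↥(invariantForms (psRep χ₁ χ₂) (mirabF σ₀)) = 3 ∧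
    invariantForms (psRep χ₁ χ₂) (mirabF σ₀) ≠ invariantForms (psRep χ₁ χ₂) (glF σ₀) := by
  have hss : ∀ x : E, σ₀ (σ₀ x) = x := sigma_sigma σ₀ hcard hσ₀
  have hex : ∃ δ : E, σ₀ δ ≠ δ := exists_nonfixed σ₀ hcard hσ₀
  have h2 := glF_rank hss htriv₁ htriv₂ hne
  have h3 := mirab_rank hss htriv₁ htriv₂ hex
  refine ⟨ps_irred hne, h2, h3, ?_⟩
  intro heq
  rw [heq, h2] at h3
  norm_num at h3

end TestVectors
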